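/- arXiv:1310.6644 — 4 statements merged into one kernel-verified Lean document; each statement's English description precedes it below -/
import Mathlib

section
/- In any dimaze, every linkable set of vertices can be extended to a set that is linkable onto the exits; that is, if a set I is linkable to B_0, then there exists a set J with I ⊆ J and a linkage from J whose paths have terminal vertices covering all of B_0. -/
open Set

universe u

variable {V : Type*}

/-- A directed path in the digraph `D`: a nonempty duplicate-free list of vertices
with an edge between consecutive vertices. -/
structure DiPath {V : Type*} (D : V → V → Prop) where
  verts : List V
  ne : verts ≠ []
  nodup : verts.Nodup
  chain : verts.Chain' D

namespace DiPath

variable {D : V → V → Prop}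

/-- The initial vertex of a directed path. -/
def first (p : DiPath D) : V := p.verts.head p.ne

/-- The terminal vertex of a directed path. -/
def last (p : DiPath D) : V := p.verts.getLast p.ne

/-- The set of vertices of a directed path. -/
def vertSet (p : DiPath D) : Set V := {v | v ∈ p.verts}

/-- The set of (directed) edges of a directed path. -/
def edgeSet (p : DiPath D) : Set (V × V) := {e | e ∈ p.verts.zip p.verts.tail}

end DiPath

/-- The set of initial vertices of a collection of paths. -/
def Ini {D : V → V → Prop} (P : Set (DiPath D)) : Set V := {v | ∃ p ∈ P, p.first = v}

/-- The set of terminal vertices of a collection of paths. -/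
def Ter {D : V → V → Prop} (P : Set (DiPath D)) : Set V := {v | ∃ p ∈ P, p.last = v}

/-- All vertices used by a collection of paths. -/
def LinkVerts {D : V → V → Prop} (P : Set (DiPath D)) : Set V := ⋃ p ∈ P, p.vertSet

/-- All edges used by a collection of paths. -/
def LinkEdges {D : V → V → Prop} (P : Set (DiPath D)) : Set (V × V) := ⋃ p ∈ P, p.edgeSet

/-- A linkage in the dimaze `(D, B0)`: a set of pairwise vertex-disjoint directed
paths, each ending in `B0`. -/
def IsLinkage (D : V → V → Prop) (B0 : Set V) (P : Set (DiPath D)) : Prop :=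
  (∀ p ∈ P, p.last ∈ B0) ∧
  (∀ p ∈ P, ∀ q ∈ P, p ≠ q → Disjoint p.vertSet q.vertSet)

/-- `(D, B0)` is a dimaze: every vertex of `B0` has out-degree `0`. -/
def IsDimaze (D : V → V → Prop) (B0 : Set V) : Prop := ∀ b ∈ B0, ∀ v, ¬ D b v

/-- A set of vertices is linkable if it is the set of initial vertices of a linkage. -/
def Linkable (D : V → V → Prop) (B0 : Set V) (I : Set V) : Prop :=
  ∃ P, IsLinkage D B0 P ∧ Ini P = I

/-- A set of vertices is linkable onto `B0` if it is the set of initial vertices of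
a linkage whose terminal vertices are all of `B0`. -/
def LinkableOnto (D : V → V → Prop) (B0 : Set V) (I : Set V) : Prop :=
  ∃ P, IsLinkage D B0 P ∧ Ini P = I ∧ Ter P = B0

/-- `I` is a maximal element (w.r.t. inclusion) of the set system `Ind`. -/
def MaximalIn {α : Type*} (Ind : Set α → Prop) (I : Set α) : Prop :=
  Ind I ∧ ∀ J, Ind J → I ⊆ J → J = I

/-- The maximality axiom (IM). -/
def SatisfiesIM {α : Type*} (Ind : Set α → Prop) : Prop :=
  ∀ I X : Set α, Ind I → I ⊆ X →
    ∃ J, Ind J ∧ I ⊆ J ∧ J ⊆ X ∧ ∀ K, Ind K → K ⊆ X → J ⊆ K → K = J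

/-- `Ind` is the collection of independent sets of a matroid:
axioms (I1), (I2), (I3) and (IM). -/
def IsMatroidIndep {α : Type*} (Ind : Set α → Prop) : Prop :=
  Ind ∅ ∧
  (∀ I J : Set α, I ⊆ J → Ind J → Ind I) ∧
  (∀ I B : Set α, Ind I → ¬ MaximalIn Ind I → MaximalIn Ind B →
    ∃ x ∈ B \ I, Ind (insert x I)) ∧
  SatisfiesIM Ind

/-- The dimaze `(D, B0)` contains an alternating comb: there is an alternating ray
(given by the injective vertex sequence `f` and edge orientations `o`, with
infinitely many vertices of in-degree 2) together with a linkage of all its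
in-degree-2 vertices and its first vertex onto a set of exits contained in `B0`,
by disjoint paths meeting the ray exactly at their initial vertices. -/
def ContainsAltComb (D : V → V → Prop) (B0 : Set V) : Prop :=
  ∃ (f : ℕ → V) (o : ℕ → Bool) (P : Set (DiPath D)),
    Function.Injective f ∧
    (∀ n, if o n then D (f n) (f (n+1)) else D (f (n+1)) (f n)) ∧
    (∀ N, ∃ k ≥ N, o k = true ∧ o (k+1) = false) ∧
    IsLinkage D B0 P ∧
    Ini P = insert (f 0) {v | ∃ k, o k = true ∧ o (k+1) = false ∧ v = f (k+1)} ∧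
    (∀ p ∈ P, ∀ v ∈ p.vertSet, v ∈ Set.range f → v = p.first)

/-- Auxiliary: a non-last vertex of a chain has an out-edge. -/
lemma chain'_out_edge {D : V → V → Prop} :
    ∀ (l : List V) (h : l ≠ []), l.Chain' D → ∀ v ∈ l, v ≠ l.getLast h → ∃ w, D v w := by
  intro l
  induction l with
  | nil => simp
  | cons a t ih =>
    intro h hc v hv hne
    cases t with
    | nil =>
      simp at hv
      simp [hv] at hne
    | cons b t' =>
      replace hc := List.isChain_cons_cons.1 hc
      rcases List.mem_cons.1 hv with rfl | hv'
      · exact ⟨b, hc.1⟩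
      · have := ih (by simp) hc.2 v hv'
        apply this
        rwa [List.getLast_cons (by simp)] at hne

/-- Trivial single-vertex path. -/
def singlePath (D : V → V → Prop) (b : V) : DiPath D :=
  ⟨[b], by simp, by simp, List.isChain_singleton b⟩

/-- In any dimaze, every linkable set extends to a set linkable onto the exits. -/
theorem linkable_extends_to_linkableOnto (D : V → V → Prop) (B0 : Set V)
    (hD : IsDimaze D B0) (I : Set V) (hI : Linkable D B0 I) :
    ∃ J : Set V, I ⊆ J ∧ LinkableOnto D B0 J := by
  obtain ⟨P, hP, hIni⟩ := hI
  refine ⟨I ∪ (B0 \ Ter P), subset_union_left, ?_⟩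
  set Q : Set (DiPath D) := P ∪ (singlePath D '' (B0 \ Ter P)) with hQ
  have hTerSub : Ter P ⊆ B0 := by
    rintro v ⟨p, hp, rfl⟩; exact hP.1 p hp
  have hnotmem : ∀ b ∈ B0 \ Ter P, ∀ p ∈ P, b ∉ p.vertSet := by
    rintro b ⟨hb, hbT⟩ p hp hbv
    by_cases hlast : b = p.last
    · exact hbT ⟨p, hp, hlast.symm⟩
    · obtain ⟨w, hw⟩ := chain'_out_edge p.verts p.ne p.chain b hbv hlast
      exact hD b hb w hw
  refine ⟨Q, ⟨?_, ?_⟩, ?_, ?_⟩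
  · rintro p (hp | ⟨b, hb, rfl⟩)
    · exact hP.1 p hp
    · exact hb.1
  · have key : ∀ p ∈ P, ∀ b ∈ B0 \ Ter P, Disjoint p.vertSet (singlePath D b).vertSet := by
      intro p hp b hb
      have : (singlePath D b).vertSet = {b} := by
        simp [singlePath, DiPath.vertSet, Set.ext_iff]
      rw [this, Set.disjoint_singleton_right]
      exact hnotmem b hb p hp
    rintro p (hp | ⟨b, hb, rfl⟩) q (hq | ⟨c, hc, rfl⟩) hne
    · exact hP.2 p hp q hq hne
    · exact key p hp c hc
    · exact (key q hq b hb).symm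
    · have : b ≠ c := fun h => hne (by rw [h])
      simp [singlePath, DiPath.vertSet, Set.ext_iff, Set.disjoint_left, this]
  · ext v
    simp only [Ini, Set.mem_setOf_eq, hQ, Set.mem_union]
    constructor
    · rintro ⟨p, hp | ⟨b, hb, rfl⟩, rfl⟩
      · exact Or.inl (hIni ▸ ⟨p, hp, rfl⟩)
      · exact Or.inr hb
    · rintro (hv | hv)
      · obtain ⟨p, hp, rfl⟩ := hIni ▸ hv
        exact ⟨p, Or.inl hp, rfl⟩
      · exact ⟨singlePath D v, Or.inr ⟨v, hv, rfl⟩, rfl⟩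
  · ext v
    simp only [Ter, Set.mem_setOf_eq, hQ, Set.mem_union]
    constructor
    · rintro ⟨p, hp | ⟨b, hb, rfl⟩, rfl⟩
      · exact hP.1 p hp
      · exact hb.1
    · intro hv
      by_cases hT : v ∈ Ter P
      · obtain ⟨p, hp, rfl⟩ := hT
        exact ⟨p, Or.inl hp, rfl⟩
      · exact ⟨singlePath D v, Or.inr ⟨v, ⟨hv, hT⟩, rfl⟩, rfl⟩
end

section
/- Linkage theorem (Pym): Let D be a digraph, P a linkage from a vertex set X_P onto a vertex set Y_P, and Q a linkage from X_Q onto Y_Q. Then there exist sets X∞ and Y∞ with X_P ⊆ X∞ ⊆ X_P ∪ X_Q and Y_Q ⊆ Y∞ ⊆ Y_Q ∪ Y_P, and a linkage from X∞ onto Y∞. -/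
open Set

universe u

variable {V : Type*}

namespace PymAux
open List

variable {V : Type*}

noncomputable def nmem (W : Set V) (v : V) : Bool := @decide (v ∉ W) (Classical.propDecidable _)

lemma nmem_iff {W : Set V} {v : V} : nmem W v = true ↔ v ∉ W := by
  simp [nmem, @decide_eq_true_iff _ (Classical.propDecidable _)]

lemma nmem_false_iff {W : Set V} {v : V} : nmem W v = false ↔ v ∈ W := by
  rw [← Bool.not_eq_true, nmem_iff]; simp

/-- Initial segment of `l` up to and including the first vertex in `W`
(all of `l` if there is none). -/
noncomputable def headTo (W : Set V) (l : List V) : List V :=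
  l.takeWhile (nmem W) ++ (l.dropWhile (nmem W)).take 1

lemma headTo_prefix (W : Set V) (l : List V) : headTo W l <+: l :=
  ⟨(l.dropWhile (nmem W)).drop 1, by
    rw [headTo, append_assoc, take_append_drop, takeWhile_append_dropWhile]⟩

lemma headTo_ne_nil {W : Set V} {l : List V} (h : l ≠ []) : headTo W l ≠ [] := by
  intro hc
  rw [headTo, append_eq_nil_iff] at hc
  apply h
  have h2 : l.dropWhile (nmem W) = [] := by
    rcases hd : l.dropWhile (nmem W) with _ | ⟨a, t⟩
    · rfl
    · rw [hd] at hc; simp at hc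
  rw [← takeWhile_append_dropWhile (p := nmem W) (l := l), hc.1, h2]; rfl

lemma mem_dropLast_headTo {W : Set V} {l : List V} {v : V}
    (hv : v ∈ (headTo W l).dropLast) : v ∉ W := by
  rcases hd : l.dropWhile (nmem W) with _ | ⟨a, t⟩
  · rw [headTo, hd] at hv
    simp only [take_nil, append_nil] at hv
    exact nmem_iff.1 (mem_takeWhile_imp (dropLast_subset _ hv))
  · rw [headTo, hd] at hv
    simp only [take_succ_cons, take_zero, dropLast_concat] at hv
    exact nmem_iff.1 (mem_takeWhile_imp hv)

lemma getLast_headTo_or {W : Set V} {l : List V} (h : l ≠ []) :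
    (headTo W l).getLast (headTo_ne_nil h) = l.getLast h ∨
      (headTo W l).getLast (headTo_ne_nil h) ∈ W := by
  rcases hd : l.dropWhile (nmem W) with _ | ⟨a, t⟩
  · left
    have h1 : headTo W l = l := by
      conv_rhs => rw [← takeWhile_append_dropWhile (p := nmem W) (l := l)]
      rw [headTo, hd]; simp
    exact getLast_congr _ _ h1
  · right
    have h1 : headTo W l = l.takeWhile (nmem W) ++ [a] := by rw [headTo, hd]; simp
    have h2 : (headTo W l).getLast (headTo_ne_nil h) = a := by
      rw [getLast_congr _ (by simp) h1]; exact getLast_concat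
    rw [h2]
    have h3 : (l.dropWhile (nmem W)) ≠ [] := by rw [hd]; simp
    have := head_dropWhile_not (nmem W) (l := l) h3
    have ha : (l.dropWhile (nmem W)).head h3 = a := by
      simp only [hd, head_cons]
    rw [ha] at this
    exact nmem_false_iff.1 this


lemma head_congr' {α : Type*} {l₁ l₂ : List α} (h : l₁ = l₂) (h₁ : l₁ ≠ []) :
    l₁.head h₁ = l₂.head (h ▸ h₁) := by subst h; rfl

lemma head_headTo {W : Set V} {l : List V} (h : l ≠ []) :
    (headTo W l).head (headTo_ne_nil h) = l.head h :=
  (headTo_prefix W l).head _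

lemma length_takeWhile_le_of_imp {α : Type*} {p q : α → Bool}
    (h : ∀ a, p a = true → q a = true) :
    ∀ l : List α, (l.takeWhile p).length ≤ (l.takeWhile q).length := by
  intro l
  induction l with
  | nil => simp
  | cons a l ih =>
    by_cases hp : p a = true
    · simp only [takeWhile_cons, hp, h a hp, if_true, length_cons]
      omega
    · simp only [takeWhile_cons, Bool.not_eq_true] at hp ⊢
      rw [hp]
      simp

lemma length_headTo (W : Set V) (l : List V) :
    (headTo W l).length = min ((l.takeWhile (nmem W)).length + 1) l.length := by
  have hlen : (l.takeWhile (nmem W)).length + (l.dropWhile (nmem W)).length = l.length := by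
    have h0 := congrArg length (takeWhile_append_dropWhile (p := nmem W) (l := l))
    rw [length_append] at h0
    exact h0
  rw [headTo, length_append, length_take]
  omega

lemma headTo_subset_mono {W W' : Set V} (hW : W' ⊆ W) (l : List V) :
    ∀ v ∈ headTo W l, v ∈ headTo W' l := by
  have himp : ∀ a : V, nmem W a = true → nmem W' a = true := by
    intro a ha
    rw [nmem_iff] at ha ⊢
    exact fun hc => ha (hW hc)
  have hlen : (headTo W l).length ≤ (headTo W' l).length := by
    rw [length_headTo, length_headTo]
    have := length_takeWhile_le_of_imp himp l
    omega
  exact fun v hv =>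
    ((prefix_of_prefix_length_le (headTo_prefix W l) (headTo_prefix W' l) hlen).sublist.subset) hv

/-- Final segment of `l` from the last vertex in `U` (all of `l` if there is none). -/
noncomputable def tailFrom (U : Set V) (l : List V) : List V := (headTo U l.reverse).reverse

lemma tailFrom_suffix (U : Set V) (l : List V) : tailFrom U l <:+ l := by
  have h := headTo_prefix U l.reverse
  rw [tailFrom, ← reverse_prefix]
  simpa using h

lemma tailFrom_ne_nil {U : Set V} {l : List V} (h : l ≠ []) : tailFrom U l ≠ [] := by
  rw [tailFrom]
  simp only [ne_eq, reverse_eq_nil_iff]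
  exact headTo_ne_nil (by simpa using h)

lemma mem_tail_tailFrom {U : Set V} {l : List V} {v : V}
    (hv : v ∈ (tailFrom U l).tail) : v ∉ U := by
  rw [tailFrom, tail_reverse, mem_reverse] at hv
  exact mem_dropLast_headTo hv

lemma head_tailFrom_or {U : Set V} {l : List V} (h : l ≠ []) :
    (tailFrom U l).head (tailFrom_ne_nil h) = l.head h ∨
      (tailFrom U l).head (tailFrom_ne_nil h) ∈ U := by
  have h' : l.reverse ≠ [] := by simpa using h
  have h1 : (tailFrom U l).head (tailFrom_ne_nil h) =
      (headTo U l.reverse).getLast (headTo_ne_nil h') :=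
    head_reverse (l := headTo U l.reverse) (by simpa using headTo_ne_nil h')
  rcases getLast_headTo_or (W := U) h' with h2 | h2
  · left
    rw [h1, h2, getLast_reverse]
  · right; rw [h1]; exact h2

lemma getLast_tailFrom {U : Set V} {l : List V} (h : l ≠ []) :
    (tailFrom U l).getLast (tailFrom_ne_nil h) = l.getLast h := by
  have h' : l.reverse ≠ [] := by simpa using h
  have h1 : (tailFrom U l).getLast (tailFrom_ne_nil h) =
      (headTo U l.reverse).head (headTo_ne_nil h') :=
    getLast_reverse (l := headTo U l.reverse) (by simpa using headTo_ne_nil h')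
  rw [h1, head_headTo h', head_reverse]

lemma tailFrom_subset_mono {U U' : Set V} (hU : U ⊆ U') (l : List V) :
    ∀ v ∈ tailFrom U' l, v ∈ tailFrom U l := by
  intro v hv
  rw [tailFrom, mem_reverse] at hv ⊢
  exact headTo_subset_mono hU l.reverse v hv

variable {D : V → V → Prop}

lemma dipath_ext {r₁ r₂ : DiPath D} (h : r₁.verts = r₂.verts) : r₁ = r₂ := by
  cases r₁; cases r₂; cases h; rfl

/-- Union of the kept final segments of the `Q`-paths, given `U`. -/
noncomputable def qtails (Q : Set (DiPath D)) (U : Set V) : Set V :=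
  ⋃ q ∈ Q, {v | v ∈ tailFrom U q.verts}

lemma qtails_anti {Q : Set (DiPath D)} {U U' : Set V} (h : U ⊆ U') :
    qtails Q U' ⊆ qtails Q U := by
  intro v hv
  simp only [qtails, Set.mem_iUnion, Set.mem_setOf_eq] at hv ⊢
  obtain ⟨q, hq, hv⟩ := hv
  exact ⟨q, hq, tailFrom_subset_mono h _ v hv⟩

/-- The monotone operator whose fixed point determines the hybrid linkage. -/
noncomputable def PhiOp (P Q : Set (DiPath D)) : Set V →o Set V where
  toFun U := ⋃ p ∈ P, {v | v ∈ headTo (qtails Q U) p.verts}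
  monotone' := by
    intro U U' hUU' v hv
    simp only [Set.mem_iUnion, Set.mem_setOf_eq] at hv ⊢
    obtain ⟨p, hp, hv⟩ := hv
    exact ⟨p, hp, headTo_subset_mono (qtails_anti hUU') _ v hv⟩

noncomputable def Ufix (P Q : Set (DiPath D)) : Set V := (PhiOp P Q).lfp
noncomputable def Wfix (P Q : Set (DiPath D)) : Set V := qtails Q (Ufix P Q)

/-- The kept head of a `P`-path. -/
noncomputable def Hl (P Q : Set (DiPath D)) (p : DiPath D) : List V :=
  headTo (Wfix P Q) p.verts

/-- The kept tail of a `Q`-path. -/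
noncomputable def Tl (P Q : Set (DiPath D)) (q : DiPath D) : List V :=
  tailFrom (Ufix P Q) q.verts

noncomputable def tv (P Q : Set (DiPath D)) (p : DiPath D) : V :=
  (Hl P Q p).getLast (headTo_ne_nil p.ne)

noncomputable def sv (P Q : Set (DiPath D)) (q : DiPath D) : V :=
  (Tl P Q q).head (tailFrom_ne_nil q.ne)

lemma mem_Ufix_iff {P Q : Set (DiPath D)} {v : V} :
    v ∈ Ufix P Q ↔ ∃ p ∈ P, v ∈ Hl P Q p := by
  have h0 : Ufix P Q = ⋃ p ∈ P, {v | v ∈ Hl P Q p} := by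
    conv_lhs => rw [Ufix, ← OrderHom.map_lfp (PhiOp P Q)]
    rfl
  rw [h0]
  simp

lemma mem_Wfix_iff {P Q : Set (DiPath D)} {v : V} :
    v ∈ Wfix P Q ↔ ∃ q ∈ Q, v ∈ Tl P Q q := by
  rw [Wfix, qtails]
  simp [Tl]

end PymAux

/-- Pym's linkage theorem. -/
theorem linkage_theorem (D : V → V → Prop) (P Q : Set (DiPath D))
    (hP : IsLinkage D Set.univ P) (hQ : IsLinkage D Set.univ Q) :
    ∃ S : Set (DiPath D), IsLinkage D Set.univ S ∧
      Ini P ⊆ Ini S ∧ Ini S ⊆ Ini P ∪ Ini Q ∧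
      Ter Q ⊆ Ter S ∧ Ter S ⊆ Ter Q ∪ Ter P := by
  classical
  obtain ⟨-, hPdisj⟩ := hP
  obtain ⟨-, hQdisj⟩ := hQ
  set H : DiPath D → List V := PymAux.Hl P Q with hHdef
  set T : DiPath D → List V := PymAux.Tl P Q with hTdef
  set tv : DiPath D → V := PymAux.tv P Q with htvdef
  set sv : DiPath D → V := PymAux.sv P Q with hsvdef
  have hHne : ∀ p : DiPath D, H p ≠ [] := fun p => PymAux.headTo_ne_nil p.ne
  have hTne : ∀ q : DiPath D, T q ≠ [] := fun q => PymAux.tailFrom_ne_nil q.ne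
  have hHsub : ∀ p : DiPath D, ∀ v ∈ H p, v ∈ p.verts := fun p v hv =>
    (PymAux.headTo_prefix _ _).sublist.subset hv
  have hTsub : ∀ q : DiPath D, ∀ v ∈ T q, v ∈ q.verts := fun q v hv =>
    (PymAux.tailFrom_suffix _ _).sublist.subset hv
  have hHnodup : ∀ p : DiPath D, (H p).Nodup := fun p =>
    List.Nodup.sublist (PymAux.headTo_prefix _ _).sublist p.nodup
  have hTnodup : ∀ q : DiPath D, (T q).Nodup := fun q =>
    List.Nodup.sublist (PymAux.tailFrom_suffix _ _).sublist q.nodup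
  have hHchain : ∀ p : DiPath D, (H p).Chain' D := fun p =>
    p.chain.prefix (PymAux.headTo_prefix _ _)
  have hTchain : ∀ q : DiPath D, (T q).Chain' D := fun q =>
    q.chain.suffix (PymAux.tailFrom_suffix _ _)
  have hHhead : ∀ p : DiPath D, (H p).head (hHne p) = p.verts.head p.ne := fun p =>
    PymAux.head_headTo p.ne
  have hTlast : ∀ q : DiPath D, (T q).getLast (hTne q) = q.verts.getLast q.ne := fun q =>
    PymAux.getLast_tailFrom q.ne
  have htv_mem : ∀ p : DiPath D, tv p ∈ H p := fun p => List.getLast_mem _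
  have hsv_mem : ∀ q : DiPath D, sv q ∈ T q := fun q => List.head_mem _
  have hT_cons : ∀ q : DiPath D, sv q :: (T q).tail = T q := fun q =>
    List.cons_head_tail _
  have hH_split : ∀ p : DiPath D, (H p).dropLast ++ [tv p] = H p := fun p =>
    List.dropLast_append_getLast _
  have hsv_not_tail : ∀ q : DiPath D, sv q ∉ (T q).tail := by
    intro q
    have h := hTnodup q
    rw [← hT_cons q, List.nodup_cons] at h
    exact h.1
  -- The key crossing lemma: a vertex on a kept head and a kept tail must be
  -- the cut vertex of both.
  have hcross : ∀ p ∈ P, ∀ q ∈ Q, ∀ v, v ∈ H p → v ∈ T q → v = tv p ∧ v = sv q := by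
    intro p hp q hq v hvH hvT
    have hvU : v ∈ PymAux.Ufix P Q := PymAux.mem_Ufix_iff.2 ⟨p, hp, hvH⟩
    have hvW : v ∈ PymAux.Wfix P Q := PymAux.mem_Wfix_iff.2 ⟨q, hq, hvT⟩
    have h1 : v = tv p := by
      by_contra hvne
      have hv' : v ∈ (H p).dropLast := by
        have hsp := hH_split p
        rw [← hsp, List.mem_append] at hvH
        rcases hvH with h | h
        · exact h
        · simp only [List.mem_singleton] at h
          exact absurd h hvne
      exact PymAux.mem_dropLast_headTo hv' hvW
    have h2 : v = sv q := by
      by_contra hvne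
      have hv' : v ∈ (T q).tail := by
        rw [← hT_cons q, List.mem_cons] at hvT
        tauto
      exact PymAux.mem_tail_tailFrom hv' hvU
    exact ⟨h1, h2⟩
  have hlink : ∀ p ∈ P, ∀ q ∈ Q, ∀ v, v ∈ H p → v ∈ T q → tv p = sv q := by
    intro p hp q hq v h1 h2
    obtain ⟨e1, e2⟩ := hcross p hp q hq v h1 h2
    exact e1.symm.trans e2
  have hHH : ∀ p1 ∈ P, ∀ p2 ∈ P, ∀ v, v ∈ H p1 → v ∈ H p2 → p1 = p2 := by
    intro p1 hp1 p2 hp2 v h1 h2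
    by_contra hne
    exact Set.disjoint_left.1 (hPdisj p1 hp1 p2 hp2 hne) (hHsub p1 v h1) (hHsub p2 v h2)
  have hTT : ∀ q1 ∈ Q, ∀ q2 ∈ Q, ∀ v, v ∈ T q1 → v ∈ T q2 → q1 = q2 := by
    intro q1 hq1 q2 hq2 v h1 h2
    by_contra hne
    exact Set.disjoint_left.1 (hQdisj q1 hq1 q2 hq2 hne) (hTsub q1 v h1) (hTsub q2 v h2)
  have hA : ∀ p ∈ P, tv p = p.verts.getLast p.ne ∨ ∃ q ∈ Q, tv p = sv q := by
    intro p hp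
    rcases PymAux.getLast_headTo_or (W := PymAux.Wfix P Q) p.ne with h | h
    · exact Or.inl h
    · obtain ⟨q, hq, hvq⟩ := PymAux.mem_Wfix_iff.1 h
      exact Or.inr ⟨q, hq, (hcross p hp q hq _ (htv_mem p) hvq).2⟩
  have hB : ∀ q ∈ Q, sv q = q.verts.head q.ne ∨ ∃ p ∈ P, tv p = sv q := by
    intro q hq
    rcases PymAux.head_tailFrom_or (U := PymAux.Ufix P Q) q.ne with h | h
    · exact Or.inl h
    · obtain ⟨p, hp, hvp⟩ := PymAux.mem_Ufix_iff.1 h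
      exact Or.inr ⟨p, hp, ((hcross p hp q hq _ hvp (hsv_mem q)).1).symm⟩
  have hmix : ∀ p1 ∈ P, ∀ p2 ∈ P, ∀ q2 ∈ Q, tv p2 = sv q2 →
      ∀ v, v ∈ H p1 → v ∈ (T q2).tail → p1 = p2 := by
    intro p1 hp1 p2 hp2 q2 hq2 hm v hv hvt
    have h1 : tv p1 = sv q2 := hlink p1 hp1 q2 hq2 v hv (List.mem_of_mem_tail hvt)
    have h2 : tv p1 = tv p2 := h1.trans hm.symm
    exact hHH p1 hp1 p2 hp2 (tv p1) (htv_mem p1) (h2 ▸ htv_mem p2)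
  -- constructors
  have mkH : ∀ p : DiPath D, ∃ r : DiPath D, r.verts = H p := fun p =>
    ⟨⟨H p, hHne p, hHnodup p, hHchain p⟩, rfl⟩
  have mkT : ∀ q : DiPath D, ∃ r : DiPath D, r.verts = T q := fun q =>
    ⟨⟨T q, hTne q, hTnodup q, hTchain q⟩, rfl⟩
  have mkC : ∀ p ∈ P, ∀ q ∈ Q, tv p = sv q →
      ∃ r : DiPath D, r.verts = H p ++ (T q).tail := by
    intro p hp q hq hm
    refine ⟨⟨H p ++ (T q).tail, ?_, ?_, ?_⟩, rfl⟩
    · simp [hHne p]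
    · refine (hHnodup p).append (List.Nodup.sublist (List.tail_sublist _) (hTnodup q)) ?_
      rw [List.disjoint_left]
      intro v hv hvt
      have h2 := (hcross p hp q hq v hv (List.mem_of_mem_tail hvt)).2
      exact hsv_not_tail q (h2 ▸ hvt)
    · apply List.isChain_append.2
      refine ⟨hHchain p, (hTchain q).tail, ?_⟩
      intro x hx y hy
      have hx' : x = tv p := by
        rw [List.getLast?_eq_getLast (hHne p)] at hx
        simp only [Option.mem_def, Option.some.injEq] at hx
        exact hx.symm
      have hchain := hTchain q
      rw [← hT_cons q] at hchain
      have hD := (List.isChain_cons.1 hchain).1 y hy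
      rw [hx', hm]
      exact hD
  -- first/last computations
  have hfirstH : ∀ (r : DiPath D) (p : DiPath D), r.verts = H p → r.first = p.first := by
    intro r p hr
    exact (PymAux.head_congr' hr r.ne).trans (hHhead p)
  have hfirstC : ∀ (r p q : DiPath D), r.verts = H p ++ (T q).tail → r.first = p.first := by
    intro r p q hr
    refine (PymAux.head_congr' hr r.ne).trans ?_
    exact (List.head_append_of_ne_nil (hHne p)).trans (hHhead p)
  have hfirstT : ∀ (r q : DiPath D), r.verts = T q → r.first = sv q := by
    intro r q hr
    exact PymAux.head_congr' hr r.ne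
  have hlastH : ∀ (r p : DiPath D), r.verts = H p → r.last = tv p := by
    intro r p hr
    exact List.getLast_congr _ _ hr
  have hlastT : ∀ (r q : DiPath D), r.verts = T q → r.last = q.last := by
    intro r q hr
    exact (List.getLast_congr _ _ hr).trans (hTlast q)
  have hlastC : ∀ (r p q : DiPath D), tv p = sv q → r.verts = H p ++ (T q).tail →
      r.last = q.last := by
    intro r p q hm hr
    rcases ht : (T q).tail with _ | ⟨a, t⟩
    · have hr' : r.verts = H p := by rw [hr, ht, List.append_nil]
      have h1 : r.last = tv p := hlastH r p hr'
      have h2 : T q = [sv q] := by rw [← hT_cons q, ht]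
      have h3 : (T q).getLast (hTne q) = sv q := by
        rw [List.getLast_congr _ (by simp) h2]
        rfl
      rw [h1, hm, ← h3, hTlast q]
      rfl
    · have hne2 : (T q).tail ≠ [] := by rw [ht]; simp
      have hne1 : H p ++ (T q).tail ≠ [] := by simp [hHne p]
      have h1 : r.last = ((T q).tail).getLast hne2 :=
        (List.getLast_congr r.ne hne1 hr).trans (List.getLast_append_of_ne_nil _ hne2)
      have h2 : (T q).getLast (hTne q) = ((T q).tail).getLast hne2 :=
        (List.getLast_congr (hTne q) (List.cons_ne_nil _ _) (hT_cons q).symm).trans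
          (List.getLast_cons hne2)
      rw [h1, ← h2, hTlast q]
      rfl
  -- the hybrid linkage
  refine ⟨{r : DiPath D |
      (∃ p ∈ P, ∃ q ∈ Q, tv p = sv q ∧ r.verts = H p ++ (T q).tail) ∨
      (∃ p ∈ P, (∀ q ∈ Q, tv p ≠ sv q) ∧ r.verts = H p) ∨
      (∃ q ∈ Q, (∀ p ∈ P, tv p ≠ sv q) ∧ r.verts = T q)},
    ⟨fun r _ => trivial, ?_⟩, ?_, ?_, ?_, ?_⟩
  · -- pairwise disjointness
    intro r1 hr1 r2 hr2 hne
    simp only [Set.mem_setOf_eq] at hr1 hr2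
    rw [Set.disjoint_left]
    intro v hv1 hv2
    simp only [DiPath.vertSet, Set.mem_setOf_eq] at hv1 hv2
    rcases hr1 with ⟨p1, hp1, q1, hq1, hm1, hveq1⟩ | ⟨p1, hp1, hun1, hveq1⟩ |
        ⟨q1, hq1, hun1, hveq1⟩ <;>
      rcases hr2 with ⟨p2, hp2, q2, hq2, hm2, hveq2⟩ | ⟨p2, hp2, hun2, hveq2⟩ |
        ⟨q2, hq2, hun2, hveq2⟩
    · -- matched / matched
      rw [hveq1, List.mem_append] at hv1
      rw [hveq2, List.mem_append] at hv2
      have hp12 : p1 = p2 := by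
        rcases hv1 with h1 | h1 <;> rcases hv2 with h2 | h2
        · exact hHH p1 hp1 p2 hp2 v h1 h2
        · exact hmix p1 hp1 p2 hp2 q2 hq2 hm2 v h1 h2
        · exact (hmix p2 hp2 p1 hp1 q1 hq1 hm1 v h2 h1).symm
        · have hq12 : q1 = q2 := hTT q1 hq1 q2 hq2 v (List.mem_of_mem_tail h1)
            (List.mem_of_mem_tail h2)
          have h3 : tv p1 = tv p2 := by rw [hm1, hm2, hq12]
          exact hHH p1 hp1 p2 hp2 (tv p1) (htv_mem p1) (h3 ▸ htv_mem p2)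
      have hq12 : q1 = q2 := by
        have h3 : sv q1 = sv q2 := by rw [← hm1, ← hm2, hp12]
        exact hTT q1 hq1 q2 hq2 (sv q1) (hsv_mem q1) (h3 ▸ hsv_mem q2)
      exact hne (PymAux.dipath_ext (by rw [hveq1, hveq2, hp12, hq12]))
    · -- matched / unmatched-P
      rw [hveq1, List.mem_append] at hv1
      rw [hveq2] at hv2
      have hp12 : p1 = p2 := by
        rcases hv1 with h1 | h1
        · exact hHH p1 hp1 p2 hp2 v h1 hv2
        · exact (hmix p2 hp2 p1 hp1 q1 hq1 hm1 v hv2 h1).symm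
      exact hun2 q1 hq1 (hp12 ▸ hm1)
    · -- matched / unmatched-Q
      rw [hveq1, List.mem_append] at hv1
      rw [hveq2] at hv2
      rcases hv1 with h1 | h1
      · exact hun2 p1 hp1 (hlink p1 hp1 q2 hq2 v h1 hv2)
      · have hq12 : q1 = q2 := hTT q1 hq1 q2 hq2 v (List.mem_of_mem_tail h1) hv2
        exact hun2 p1 hp1 (hm1.trans (by rw [hq12]))
    · -- unmatched-P / matched
      rw [hveq1] at hv1
      rw [hveq2, List.mem_append] at hv2
      have hp12 : p2 = p1 := by
        rcases hv2 with h2 | h2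
        · exact hHH p2 hp2 p1 hp1 v h2 hv1
        · exact (hmix p1 hp1 p2 hp2 q2 hq2 hm2 v hv1 h2).symm
      exact hun1 q2 hq2 (hp12 ▸ hm2)
    · -- unmatched-P / unmatched-P
      rw [hveq1] at hv1
      rw [hveq2] at hv2
      have hp12 : p1 = p2 := hHH p1 hp1 p2 hp2 v hv1 hv2
      exact hne (PymAux.dipath_ext (by rw [hveq1, hveq2, hp12]))
    · -- unmatched-P / unmatched-Q
      rw [hveq1] at hv1
      rw [hveq2] at hv2
      exact hun1 q2 hq2 (hlink p1 hp1 q2 hq2 v hv1 hv2)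
    · -- unmatched-Q / matched
      rw [hveq1] at hv1
      rw [hveq2, List.mem_append] at hv2
      rcases hv2 with h2 | h2
      · exact hun1 p2 hp2 (hlink p2 hp2 q1 hq1 v h2 hv1)
      · have hq12 : q2 = q1 := hTT q2 hq2 q1 hq1 v (List.mem_of_mem_tail h2) hv1
        exact hun1 p2 hp2 (hm2.trans (by rw [hq12]))
    · -- unmatched-Q / unmatched-P
      rw [hveq1] at hv1
      rw [hveq2] at hv2
      exact hun1 p2 hp2 (hlink p2 hp2 q1 hq1 v hv2 hv1)
    · -- unmatched-Q / unmatched-Q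
      rw [hveq1] at hv1
      rw [hveq2] at hv2
      have hq12 : q1 = q2 := hTT q1 hq1 q2 hq2 v hv1 hv2
      exact hne (PymAux.dipath_ext (by rw [hveq1, hveq2, hq12]))
  · -- Ini P ⊆ Ini S
    rintro x ⟨p, hp, hpx⟩
    by_cases hm : ∃ q ∈ Q, tv p = sv q
    · obtain ⟨q, hq, hmq⟩ := hm
      obtain ⟨r, hr⟩ := mkC p hp q hq hmq
      exact ⟨r, Or.inl ⟨p, hp, q, hq, hmq, hr⟩, (hfirstC r p q hr).trans hpx⟩
    · push_neg at hm
      obtain ⟨r, hr⟩ := mkH p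
      exact ⟨r, Or.inr (Or.inl ⟨p, hp, hm, hr⟩), (hfirstH r p hr).trans hpx⟩
  · -- Ini S ⊆ Ini P ∪ Ini Q
    rintro x ⟨r, hrS, hrx⟩
    rcases hrS with ⟨p, hp, q, hq, hm, hveq⟩ | ⟨p, hp, hun, hveq⟩ | ⟨q, hq, hun, hveq⟩
    · exact Set.mem_union_left _ ⟨p, hp, ((hfirstC r p q hveq).symm.trans hrx)⟩
    · exact Set.mem_union_left _ ⟨p, hp, ((hfirstH r p hveq).symm.trans hrx)⟩
    · refine Set.mem_union_right _ ⟨q, hq, ?_⟩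
      rcases hB q hq with h | ⟨p, hp, hmp⟩
      · have h1 : r.first = q.first := by rw [hfirstT r q hveq, h]; rfl
        exact h1.symm.trans hrx
      · exact absurd hmp (hun p hp)
  · -- Ter Q ⊆ Ter S
    rintro y ⟨q, hq, hqy⟩
    by_cases hm : ∃ p ∈ P, tv p = sv q
    · obtain ⟨p, hp, hmp⟩ := hm
      obtain ⟨r, hr⟩ := mkC p hp q hq hmp
      exact ⟨r, Or.inl ⟨p, hp, q, hq, hmp, hr⟩, (hlastC r p q hmp hr).trans hqy⟩
    · push_neg at hm
      obtain ⟨r, hr⟩ := mkT q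
      exact ⟨r, Or.inr (Or.inr ⟨q, hq, hm, hr⟩), (hlastT r q hr).trans hqy⟩
  · -- Ter S ⊆ Ter Q ∪ Ter P
    rintro y ⟨r, hrS, hry⟩
    rcases hrS with ⟨p, hp, q, hq, hm, hveq⟩ | ⟨p, hp, hun, hveq⟩ | ⟨q, hq, hun, hveq⟩
    · exact Set.mem_union_left _ ⟨q, hq, ((hlastC r p q hm hveq).symm.trans hry)⟩
    · refine Set.mem_union_right _ ⟨p, hp, ?_⟩
      rcases hA p hp with h | ⟨q, hq, hmq⟩
      · have h1 : r.last = p.last := by rw [hlastH r p hveq, h]; rfl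
        exact h1.symm.trans hry
      · exact absurd hmq (hun q hq)
    · exact Set.mem_union_left _ ⟨q, hq, ((hlastT r q hveq).symm.trans hry)⟩
end

section
/- If a dimaze (D, B_0) contains no alternating comb, then a set of vertices B is a maximal linkable set if and only if B is linkable onto B_0. -/
open Set

universe u

variable {V : Type*}

namespace DiPath
variable {V : Type*} {D : V → V → Prop}
lemma first_mem (r : DiPath D) : r.first ∈ r.verts := List.head_mem r.ne
lemma last_mem (r : DiPath D) : r.last ∈ r.verts := List.getLast_mem r.ne
lemma length_pos (r : DiPath D) : 0 < r.verts.length := List.length_pos_iff.2 r.ne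
end DiPath

namespace AltProof

open List

variable {V : Type*} {D : V → V → Prop}

lemma mem_vertSet {r : DiPath D} {v : V} : v ∈ r.vertSet ↔ v ∈ r.verts := Iff.rfl

/-- the trivial path at a vertex -/
def trivPath (D : V → V → Prop) (b : V) : DiPath D :=
  ⟨[b], by simp, by simp, List.isChain_singleton b⟩

@[simp] lemma trivPath_first (b : V) : (trivPath D b).first = b := rfl
@[simp] lemma trivPath_last (b : V) : (trivPath D b).last = b := rfl
@[simp] lemma trivPath_verts (b : V) : (trivPath D b).verts = [b] := rfl

lemma Ini_union (P Q : Set (DiPath D)) : Ini (P ∪ Q) = Ini P ∪ Ini Q := by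
  ext v; constructor
  · rintro ⟨r, hr | hr, rfl⟩
    · exact Or.inl ⟨r, hr, rfl⟩
    · exact Or.inr ⟨r, hr, rfl⟩
  · rintro (⟨r, hr, rfl⟩ | ⟨r, hr, rfl⟩)
    · exact ⟨r, Or.inl hr, rfl⟩
    · exact ⟨r, Or.inr hr, rfl⟩

lemma Ter_union (P Q : Set (DiPath D)) : Ter (P ∪ Q) = Ter P ∪ Ter Q := by
  ext v; constructor
  · rintro ⟨r, hr | hr, rfl⟩
    · exact Or.inl ⟨r, hr, rfl⟩
    · exact Or.inr ⟨r, hr, rfl⟩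
  · rintro (⟨r, hr, rfl⟩ | ⟨r, hr, rfl⟩)
    · exact ⟨r, Or.inl hr, rfl⟩
    · exact ⟨r, Or.inr hr, rfl⟩

/-- In a dimaze, a vertex of `B0` lying on a path must be its last vertex. -/
lemma eq_last_of_mem_B0 {B0 : Set V} (hD : IsDimaze D B0)
    {r : DiPath D} {b : V} (hb : b ∈ B0) (hmem : b ∈ r.verts) : r.last = b := by
  classical
  have hlt : r.verts.idxOf b < r.verts.length := List.idxOf_lt_length_iff.2 hmem
  by_cases h : r.verts.idxOf b + 1 < r.verts.length
  · exfalso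
    have hc := List.isChain_iff_getElem.1 r.chain (r.verts.idxOf b) (by omega)
    have : r.verts.get ⟨r.verts.idxOf b, hlt⟩ = b := List.idxOf_get hlt
    rw [List.get_eq_getElem] at this
    rw [this] at hc
    exact hD b hb _ hc
  · have hidx : r.verts.idxOf b = r.verts.length - 1 := by omega
    have : r.verts.getLast r.ne = r.verts[r.verts.length - 1]'(by omega) :=
      r.verts.getLast_eq_getElem r.ne
    have h2 : (⟨r.verts.idxOf b, hlt⟩ : Fin r.verts.length) = ⟨r.verts.length - 1, by omega⟩ :=
      Fin.ext hidx
    have h3 : r.verts.get ⟨r.verts.idxOf b, hlt⟩ = b := List.idxOf_get hlt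
    rw [h2] at h3
    rw [List.get_eq_getElem] at h3
    rw [DiPath.last, this]
    exact h3

/-- Forward direction: a maximal linkable set is linkable onto `B0`. -/
lemma maximal_imp_onto {B0 : Set V} (hD : IsDimaze D B0) (B : Set V)
    (h : MaximalIn (Linkable D B0) B) : LinkableOnto D B0 B := by
  obtain ⟨⟨P, hP, hIni⟩, hmax⟩ := h
  set T : Set (DiPath D) := {r | ∃ b ∈ B0 \ Ter P, r = trivPath D b} with hT
  have hTer_sub : Ter P ⊆ B0 := by rintro v ⟨r, hr, rfl⟩; exact hP.1 r hr
  have hb_not_mem : ∀ b ∈ B0 \ Ter P, ∀ r ∈ P, b ∉ r.verts := by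
    rintro b ⟨hb, hbT⟩ r hr hmem
    exact hbT ⟨r, hr, eq_last_of_mem_B0 hD hb hmem⟩
  have hlink : IsLinkage D B0 (P ∪ T) := by
    constructor
    · rintro r (hr | ⟨b, hb, rfl⟩)
      · exact hP.1 r hr
      · exact hb.1
    · intro r hrm s hsm hne
      rw [Set.disjoint_left]
      intro v hvr hvs
      rw [mem_vertSet] at hvr hvs
      rcases hrm with hr | ⟨b, hb, rfl⟩
      · rcases hsm with hs | ⟨c, hc, rfl⟩
        · exact Set.disjoint_left.1 (hP.2 r hr s hs hne) hvr hvs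
        · simp only [trivPath_verts, List.mem_singleton] at hvs
          subst hvs
          exact hb_not_mem v hc r hr hvr
      · rcases hsm with hs | ⟨c, hc, rfl⟩
        · simp only [trivPath_verts, List.mem_singleton] at hvr
          subst hvr
          exact hb_not_mem v hb s hs hvs
        · simp only [trivPath_verts, List.mem_singleton] at hvr hvs
          subst hvr; subst hvs
          exact hne rfl
  have hIniT : Ini T = B0 \ Ter P := by
    ext v; constructor
    · rintro ⟨r, ⟨b, hb, rfl⟩, rfl⟩; simpa using hb
    · intro hv; exact ⟨trivPath D v, ⟨v, hv, rfl⟩, rfl⟩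
  have hIni' : Ini (P ∪ T) = B ∪ (B0 \ Ter P) := by
    rw [Ini_union, hIni, hIniT]
  have heq : B ∪ (B0 \ Ter P) = B := hmax _ ⟨P ∪ T, hlink, hIni'⟩ Set.subset_union_left
  refine ⟨P ∪ T, hlink, by rw [hIni', heq], ?_⟩
  have hTerT : Ter T = B0 \ Ter P := by
    ext v; constructor
    · rintro ⟨r, ⟨b, hb, rfl⟩, rfl⟩; simpa using hb
    · intro hv; exact ⟨trivPath D v, ⟨v, hv, rfl⟩, rfl⟩
  rw [Ter_union, hTerT, Set.union_diff_cancel hTer_sub]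

end AltProof
namespace AltProof

set_option linter.unusedSectionVars false

section Ladder

variable {V : Type*} [DecidableEq V] {D : V → V → Prop} {B0 : Set V}

/-! ### list helpers -/

lemma getD_mem {l : List V} {i : ℕ} {d : V} (h : i < l.length) : l.getD i d ∈ l := by
  rw [l.getD_eq_getElem d h]; exact List.getElem_mem h

lemma indexOf_getD {l : List V} (hnd : l.Nodup) {i : ℕ} {d : V} (h : i < l.length) :
    l.idxOf (l.getD i d) = i := by
  rw [l.getD_eq_getElem d h]; exact List.Nodup.idxOf_getElem hnd i h

lemma getD_indexOf {l : List V} {v : V} (h : v ∈ l) (d : V) :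
    l.getD (l.idxOf v) d = v := by
  rw [l.getD_eq_getElem d (List.idxOf_lt_length_iff.2 h)]
  exact List.getElem_idxOf _

lemma eq_of_indexOf_eq {l : List V} {v w : V} (hv : v ∈ l) (hw : w ∈ l)
    (h : l.idxOf v = l.idxOf w) : v = w := (List.idxOf_inj hv).1 h

lemma eq_head_of_indexOf_zero {l : List V} (hne : l ≠ []) {v : V} (hv : v ∈ l)
    (h : l.idxOf v = 0) : v = l.head hne := by
  have := getD_indexOf hv v
  rw [h] at this
  rw [← this, l.getD_eq_getElem v (by simp [List.length_pos_iff.2 hne]), l.head_eq_getElem]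

lemma indexOf_last {l : List V} (hne : l ≠ []) (hnd : l.Nodup) :
    l.idxOf (l.getLast hne) = l.length - 1 := by
  rw [l.getLast_eq_getElem hne]
  exact List.Nodup.idxOf_getElem hnd _ _

lemma indexOf_le_length_sub_one {l : List V} {v : V} (h : v ∈ l) :
    l.idxOf v ≤ l.length - 1 := by
  have := List.idxOf_lt_length_iff.2 h; omega

/-! ### the walk -/

variable (q p : ℕ → DiPath D)

/-- `v` has no "hot" vertex strictly above it on `p m`: no vertex of `p m` strictly
after `v` lies on a `q j` with `j > m`. -/
def Clean (m : ℕ) (v : V) : Prop :=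
  ∀ w ∈ (p m).verts, (p m).verts.idxOf v < (p m).verts.idxOf w →
    ∀ j, m < j → w ∉ (q j).verts

/-- the walk, at a vertex of `q k`, descends into `p m` here -/
def Trig (k : ℕ) (v : V) : Prop := ∃ m, k ≤ m ∧ v ∈ (p m).verts ∧ Clean q p m v

/-- the walk, at a vertex of `p m`, moves off onto a later `q j` here -/
def Jump (m : ℕ) (v : V) : Prop := ∃ j, m < j ∧ v ∈ (q j).verts

/-- vertex denoted by a state `(k, i, mode)` -/
def vOf : ℕ × ℕ × Bool → V
  | (k, i, true) => (q k).verts.getD i ((q k).first)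
  | (m, i, false) => (p m).verts.getD i ((p m).first)

open Classical in
noncomputable def step : ℕ × ℕ × Bool → ℕ × ℕ × Bool
  | (k, i, true) =>
    if h : Trig q p k (vOf q p (k, i, true)) then
      (h.choose, (p h.choose).verts.idxOf (vOf q p (k, i, true)) - 1, false)
    else (k, i + 1, true)
  | (m, i, false) =>
    if h : Jump q m (vOf q p (m, i, false)) then
      (h.choose, (q h.choose).verts.idxOf (vOf q p (m, i, false)) + 1, true)
    else (m, i - 1, false)

noncomputable def st : ℕ → ℕ × ℕ × Bool :=
  fun n => (step q p)^[n] (1, (p 1).verts.length - 1, false)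

/-- the alternating ray -/
noncomputable def fr : ℕ → V := fun n => vOf q p (st q p n)

/-- the orientations -/
noncomputable def og : ℕ → Bool := fun n => (st q p (n+1)).2.2

def Good : ℕ × ℕ × Bool → Prop
  | (k, i, true) => 2 ≤ k ∧ i < (q k).verts.length
  | (m, i, false) => 1 ≤ m ∧ i < (p m).verts.length ∧ Clean q p m (vOf q p (m, i, false))

def pass : ℕ × ℕ × Bool → ℕ
  | (k, _, true) => 2 * k
  | (m, _, false) => 2 * m + 1

def posn : ℕ × ℕ × Bool → ℕ
  | (_, i, true) => i
  | (m, i, false) => (p m).verts.length - 1 - i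

def PhiLt (a b : ℕ × ℕ × Bool) : Prop :=
  pass a < pass b ∨ (pass a = pass b ∧ posn p a < posn p b)

lemma PhiLt.trans {a b c : ℕ × ℕ × Bool} (h1 : PhiLt p a b) (h2 : PhiLt p b c) :
    PhiLt p a c := by
  rcases h1 with h1 | ⟨h1, h1'⟩ <;> rcases h2 with h2 | ⟨h2, h2'⟩ <;>
    [left; left; left; right] <;> omega

lemma PhiLt.irrefl {a : ℕ × ℕ × Bool} (h : PhiLt p a a) : False := by
  rcases h with h | ⟨_, h⟩ <;> omega

/-- Hypotheses on the ladder of paths. -/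
structure LadderHyps (B0 : Set V) (q p : ℕ → DiPath D) : Prop where
  hlast : ∀ n, (p n).last = (q n).last
  hpq : ∀ n, (p n).first ∈ (q (n+1)).verts
  hqd : ∀ i j, i ≠ j → Disjoint (q i).vertSet (q j).vertSet
  hpd : ∀ i j, i ≠ j → Disjoint (p i).vertSet (p j).vertSet
  hbB : ∀ n, (q n).last ∈ B0

variable {q p}

namespace LadderHyps

variable (H : LadderHyps B0 q p)
include H

lemma uniqueQ {v : V} {i j : ℕ} (hi : v ∈ (q i).verts) (hj : v ∈ (q j).verts) : i = j := by
  by_contra hne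
  exact Set.disjoint_left.1 (H.hqd i j hne) hi hj

lemma uniqueP {v : V} {i j : ℕ} (hi : v ∈ (p i).verts) (hj : v ∈ (p j).verts) : i = j := by
  by_contra hne
  exact Set.disjoint_left.1 (H.hpd i j hne) hi hj

lemma qlast_mem_p (n : ℕ) : (q n).last ∈ (p n).verts := H.hlast n ▸ (p n).last_mem

lemma pfirst_ne_plast (n : ℕ) : (p n).first ≠ (p n).last := by
  intro h
  have h1 : (p n).last ∈ (q n).verts := H.hlast n ▸ (q n).last_mem
  have h2 : (p n).last ∈ (q (n+1)).verts := h ▸ H.hpq n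
  have := H.uniqueQ h1 h2
  omega

end LadderHyps

end Ladder

end AltProof
namespace AltProof

set_option linter.unusedSectionVars false

section Ladder2

variable {V : Type*} [DecidableEq V] {D : V → V → Prop} {B0 : Set V}
variable {q p : ℕ → DiPath D}

lemma eq_last_of_indexOf {l : List V} (hne : l ≠ []) {v : V} (hv : v ∈ l)
    (h : l.idxOf v = l.length - 1) : v = l.getLast hne := by
  have h1 := getD_indexOf hv v
  rw [h] at h1
  rw [← h1, List.getD_eq_getElem _ _ (by have := List.length_pos_iff.2 hne; omega),
    List.getLast_eq_getElem]

lemma vOf_F_zero (m : ℕ) : vOf q p (m, 0, false) = (p m).first := by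
  show (p m).verts.getD 0 _ = (p m).first
  rw [List.getD_eq_getElem _ _ (p m).length_pos, DiPath.first, List.head_eq_getElem]

lemma vOf_T_last (k : ℕ) : vOf q p (k, (q k).verts.length - 1, true) = (q k).last := by
  show (q k).verts.getD _ _ = (q k).last
  rw [List.getD_eq_getElem _ _ (by have := (q k).length_pos; omega), DiPath.last,
    List.getLast_eq_getElem]

lemma vOf_F_last (m : ℕ) : vOf q p (m, (p m).verts.length - 1, false) = (p m).last := by
  show (p m).verts.getD _ _ = (p m).last
  rw [List.getD_eq_getElem _ _ (by have := (p m).length_pos; omega), DiPath.last,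
    List.getLast_eq_getElem]

namespace LadderHyps

variable (H : LadderHyps B0 q p)
include H

lemma mem_p_of_eq_qlast {v : V} {j : ℕ} (he : v = (q j).last) : v ∈ (p j).verts := by
  subst he; exact H.qlast_mem_p j

lemma mem_qsucc_of_eq_pfirst {v : V} {m : ℕ} (he : v = (p m).first) :
    v ∈ (q (m+1)).verts := by
  subst he; exact H.hpq m

lemma plen2 (n : ℕ) : 2 ≤ (p n).verts.length := by
  by_contra hlt
  push_neg at hlt
  have hpos := (p n).length_pos
  apply H.pfirst_ne_plast n
  rw [DiPath.first, DiPath.last, List.head_eq_getElem, List.getLast_eq_getElem]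
  congr 1
  omega

lemma good_phi_step : ∀ {t}, Good q p t → Good q p (step q p t) ∧ PhiLt p t (step q p t) := by
  rintro ⟨k, i, mode⟩ ht
  cases mode with
  | false =>
    obtain ⟨hk1, hilen, hclean⟩ := ht
    have hv : vOf q p (k, i, false) ∈ (p k).verts := getD_mem hilen
    have hidx : (p k).verts.idxOf (vOf q p (k, i, false)) = i :=
      indexOf_getD (p k).nodup hilen
    by_cases h : Jump q k (vOf q p (k, i, false))
    · have hstep : step q p (k, i, false) =
          (h.choose, (q h.choose).verts.idxOf (vOf q p (k, i, false)) + 1, true) := by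
        simp only [step]; rw [dif_pos h]
      obtain ⟨hkj, hvj⟩ := h.choose_spec
      have hlt : (q h.choose).verts.idxOf (vOf q p (k, i, false)) <
          (q h.choose).verts.length := List.idxOf_lt_length_iff.2 hvj
      have hne : (q h.choose).verts.idxOf (vOf q p (k, i, false)) ≠
          (q h.choose).verts.length - 1 := by
        intro he
        have hm : vOf q p (k, i, false) ∈ (p h.choose).verts :=
          H.mem_p_of_eq_qlast (eq_last_of_indexOf (q h.choose).ne hvj he)
        have := H.uniqueP hv hm; omega
      rw [hstep]
      refine ⟨⟨by omega, by omega⟩, Or.inl ?_⟩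
      simp only [pass]; omega
    · have hstep : step q p (k, i, false) = (k, i - 1, false) := by
        simp only [step]; rw [dif_neg h]
      have hi1 : 1 ≤ i := by
        by_contra h0
        have hi0 : i = 0 := by omega
        apply h
        refine ⟨k + 1, by omega, ?_⟩
        rw [hi0, vOf_F_zero]
        exact H.hpq k
      have hv' : vOf q p (k, i - 1, false) ∈ (p k).verts := getD_mem (by omega)
      have hidx' : (p k).verts.idxOf (vOf q p (k, i - 1, false)) = i - 1 :=
        indexOf_getD (p k).nodup (by omega)
      rw [hstep]
      refine ⟨⟨hk1, by omega, ?_⟩, Or.inr ⟨by simp only [pass], ?_⟩⟩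
      · intro w hw hgt j hj hwq
        rw [hidx'] at hgt
        by_cases hwv : (p k).verts.idxOf w = i
        · have hwv' : w = vOf q p (k, i, false) := eq_of_indexOf_eq hw hv (by rw [hwv, hidx])
          exact h ⟨j, hj, hwv' ▸ hwq⟩
        · exact hclean w hw (by omega) j hj hwq
      · simp only [posn]; omega
  | true =>
    obtain ⟨hk2, hilen⟩ := ht
    have hv : vOf q p (k, i, true) ∈ (q k).verts := getD_mem hilen
    have hidx : (q k).verts.idxOf (vOf q p (k, i, true)) = i :=
      indexOf_getD (q k).nodup hilen
    by_cases h : Trig q p k (vOf q p (k, i, true))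
    · have hstep : step q p (k, i, true) =
          (h.choose, (p h.choose).verts.idxOf (vOf q p (k, i, true)) - 1, false) := by
        simp only [step]; rw [dif_pos h]
      obtain ⟨hkm, hvm, hclean⟩ := h.choose_spec
      have hPlt : (p h.choose).verts.idxOf (vOf q p (k, i, true)) <
          (p h.choose).verts.length := List.idxOf_lt_length_iff.2 hvm
      have hPpos : 1 ≤ (p h.choose).verts.idxOf (vOf q p (k, i, true)) := by
        by_contra h0
        have h00 : (p h.choose).verts.idxOf (vOf q p (k, i, true)) = 0 := by omega
        have hfirst : vOf q p (k, i, true) = (p h.choose).first :=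
          eq_head_of_indexOf_zero (p h.choose).ne hvm h00
        have hmem : vOf q p (k, i, true) ∈ (q (h.choose + 1)).verts :=
          H.mem_qsucc_of_eq_pfirst hfirst
        have := H.uniqueQ hv hmem
        omega
      have hv' : vOf q p (h.choose, (p h.choose).verts.idxOf (vOf q p (k, i, true)) - 1,
          false) ∈ (p h.choose).verts := getD_mem (by omega)
      have hidx' : (p h.choose).verts.idxOf (vOf q p (h.choose,
          (p h.choose).verts.idxOf (vOf q p (k, i, true)) - 1, false)) =
          (p h.choose).verts.idxOf (vOf q p (k, i, true)) - 1 :=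
        indexOf_getD (p h.choose).nodup (by omega)
      rw [hstep]
      refine ⟨⟨by omega, by omega, ?_⟩, Or.inl ?_⟩
      · intro w hw hgt j hj hwq
        rw [hidx'] at hgt
        by_cases hwv : (p h.choose).verts.idxOf w =
            (p h.choose).verts.idxOf (vOf q p (k, i, true))
        · have hwv' : w = vOf q p (k, i, true) := eq_of_indexOf_eq hw hvm hwv
          have : k = j := H.uniqueQ hv (hwv' ▸ hwq)
          omega
        · exact hclean w hw (by omega) j hj hwq
      · simp only [pass]; omega
    · have hstep : step q p (k, i, true) = (k, i + 1, true) := by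
        simp only [step]; rw [dif_neg h]
      have hi1 : i + 1 < (q k).verts.length := by
        by_contra hc
        have hieq : i = (q k).verts.length - 1 := by omega
        apply h
        have hvlast : vOf q p (k, i, true) = (q k).last := by rw [hieq, vOf_T_last]
        refine ⟨k, le_rfl, ?_, ?_⟩
        · rw [hvlast, ← H.hlast k]; exact (p k).last_mem
        · intro w hw hgt j hj hwq
          have hL : (p k).verts.idxOf (vOf q p (k, i, true)) = (p k).verts.length - 1 := by
            rw [hvlast, ← H.hlast k]
            exact indexOf_last (p k).ne (p k).nodup
          have hwle := indexOf_le_length_sub_one hw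
          omega
      rw [hstep]
      exact ⟨⟨hk2, hi1⟩, Or.inr ⟨by simp only [pass], by simp only [posn]; omega⟩⟩

end LadderHyps

end Ladder2

end AltProof
namespace AltProof

set_option linter.unusedSectionVars false

section Ladder3

variable {V : Type*} [DecidableEq V] {D : V → V → Prop} {B0 : Set V}
variable {q p : ℕ → DiPath D}

lemma st_succ (n : ℕ) : st q p (n+1) = step q p (st q p n) :=
  Function.iterate_succ_apply' _ _ _

lemma st_zero : st q p 0 = (1, (p 1).verts.length - 1, false) := rfl

lemma fr_eq (n : ℕ) : fr q p n = vOf q p (st q p n) := rfl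

namespace LadderHyps

variable (H : LadderHyps B0 q p)
include H

lemma good_init : Good q p (st q p 0) := by
  refine ⟨le_rfl, by have := (p 1).length_pos; omega, ?_⟩
  intro w hw hgt j hj hwq
  have hidx : (p 1).verts.idxOf (vOf q p (1, (p 1).verts.length - 1, false)) =
      (p 1).verts.length - 1 :=
    indexOf_getD (p 1).nodup (by have := (p 1).length_pos; omega)
  have := indexOf_le_length_sub_one hw
  omega

lemma good_st (n : ℕ) : Good q p (st q p n) := by
  induction n with
  | zero => exact H.good_init
  | succ n ih => rw [st_succ]; exact (H.good_phi_step ih).1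

lemma phi_st_mono : ∀ {n n'}, n < n' → PhiLt p (st q p n) (st q p n') := by
  intro n n' h
  induction n' with
  | zero => omega
  | succ m ih =>
    rcases Nat.lt_or_ge n m with h1 | h2
    · exact (ih h1).trans (p := p) (by rw [st_succ]; exact (H.good_phi_step (H.good_st m)).2)
    · have hnm : n = m := by omega
      subst hnm; rw [st_succ]; exact (H.good_phi_step (H.good_st n)).2

lemma st_ne {n n' : ℕ} (h : n < n') : st q p n ≠ st q p n' := by
  intro he
  exact PhiLt.irrefl p (he ▸ H.phi_st_mono h)

lemma fr_inj_main {n n' : ℕ} (hn : n < n') (he : fr q p n = fr q p n') : False := by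
  rcases hsn : st q p n with ⟨k, i, mo⟩
  rcases hsn' : st q p n' with ⟨k', i', mo'⟩
  have hfn : fr q p n = vOf q p (k, i, mo) := by rw [fr_eq, hsn]
  have hfn' : fr q p n' = vOf q p (k', i', mo') := by rw [fr_eq, hsn']
  have hGn := H.good_st n; rw [hsn] at hGn
  have hGn' := H.good_st n'; rw [hsn'] at hGn'
  have hphi := H.phi_st_mono hn; rw [hsn, hsn'] at hphi
  cases mo with
  | true =>
    obtain ⟨hk2, hilen⟩ := hGn
    have hvq : fr q p n ∈ (q k).verts := by rw [hfn]; exact getD_mem hilen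
    have hidx : (q k).verts.idxOf (fr q p n) = i := by
      rw [hfn]; exact indexOf_getD (q k).nodup hilen
    cases mo' with
    | true =>
      obtain ⟨hk2', hilen'⟩ := hGn'
      have hvq' : fr q p n ∈ (q k').verts := by rw [he, hfn']; exact getD_mem hilen'
      have hidx' : (q k').verts.idxOf (fr q p n) = i' := by
        rw [he, hfn']; exact indexOf_getD (q k').nodup hilen'
      have hkk : k = k' := H.uniqueQ hvq hvq'
      subst hkk
      have : i = i' := by omega
      subst this
      exact H.st_ne hn (hsn.trans hsn'.symm)
    | false =>
      -- q-mode at n, p-mode at n' : the two walks merge after one step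
      obtain ⟨hm1, hilen', hclean'⟩ := hGn'
      have hvp : fr q p n ∈ (p k').verts := by rw [he, hfn']; exact getD_mem hilen'
      have hidxp : (p k').verts.idxOf (fr q p n) = i' := by
        rw [he, hfn']; exact indexOf_getD (p k').nodup hilen'
      have hkm : k ≤ k' := by
        rcases hphi with h1 | ⟨h1, _⟩ <;> simp only [pass] at h1 <;> omega
      have hcleanv : Clean q p k' (fr q p n) := by
        rw [he, hfn']; exact hclean'
      have htrig : Trig q p k (vOf q p (k, i, true)) := by
        rw [← hfn]; exact ⟨k', hkm, hvp, hcleanv⟩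
      -- compute step at n
      have hstep1 : step q p (k, i, true) =
          (htrig.choose, (p htrig.choose).verts.idxOf (vOf q p (k, i, true)) - 1, false) := by
        simp only [step]; rw [dif_pos htrig]
      have hcc : htrig.choose = k' :=
        H.uniqueP (htrig.choose_spec.2.1) (by rw [hfn] at hvp; exact hvp)
      rw [hcc, ← hfn, hidxp] at hstep1
      -- compute step at n'
      have hnj : ¬ Jump q k' (vOf q p (k', i', false)) := by
        rintro ⟨j, hj, hmem⟩
        rw [← hfn', ← he] at hmem
        have := H.uniqueQ hvq hmem
        omega
      have hstep2 : step q p (k', i', false) = (k', i' - 1, false) := by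
        simp only [step]; rw [dif_neg hnj]
      have : st q p (n+1) = st q p (n'+1) := by
        rw [st_succ, st_succ, hsn, hsn', hstep1, hstep2]
      exact H.st_ne (by omega) this
  | false =>
    obtain ⟨hm1, hilen, hclean⟩ := hGn
    have hvp : fr q p n ∈ (p k).verts := by rw [hfn]; exact getD_mem hilen
    have hidxp : (p k).verts.idxOf (fr q p n) = i := by
      rw [hfn]; exact indexOf_getD (p k).nodup hilen
    cases mo' with
    | false =>
      obtain ⟨hm1', hilen', hclean'⟩ := hGn'
      have hvp' : fr q p n ∈ (p k').verts := by rw [he, hfn']; exact getD_mem hilen'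
      have hidxp' : (p k').verts.idxOf (fr q p n) = i' := by
        rw [he, hfn']; exact indexOf_getD (p k').nodup hilen'
      have hkk : k = k' := H.uniqueP hvp hvp'
      subst hkk
      have : i = i' := by omega
      subst this
      exact H.st_ne hn (hsn.trans hsn'.symm)
    | true =>
      -- p-mode at n, q-mode at n' : merge after one step
      obtain ⟨hk2', hilen'⟩ := hGn'
      have hvq' : fr q p n ∈ (q k').verts := by rw [he, hfn']; exact getD_mem hilen'
      have hidxq' : (q k').verts.idxOf (fr q p n) = i' := by
        rw [he, hfn']; exact indexOf_getD (q k').nodup hilen'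
      have hmk : k < k' := by
        rcases hphi with h1 | ⟨h1, _⟩ <;> simp only [pass] at h1 <;> omega
      have hjump : Jump q k (vOf q p (k, i, false)) := by
        rw [← hfn]; exact ⟨k', hmk, hvq'⟩
      have hstep1 : step q p (k, i, false) =
          (hjump.choose, (q hjump.choose).verts.idxOf (vOf q p (k, i, false)) + 1, true) := by
        simp only [step]; rw [dif_pos hjump]
      have hcc : hjump.choose = k' :=
        H.uniqueQ (hjump.choose_spec.2) (by rw [hfn] at hvq'; exact hvq')
      rw [hcc, ← hfn, hidxq'] at hstep1
      have hnt : ¬ Trig q p k' (vOf q p (k', i', true)) := by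
        rintro ⟨m, hm, hmem, -⟩
        rw [← hfn', ← he] at hmem
        have := H.uniqueP hvp hmem
        omega
      have hstep2 : step q p (k', i', true) = (k', i' + 1, true) := by
        simp only [step]; rw [dif_neg hnt]
      have : st q p (n+1) = st q p (n'+1) := by
        rw [st_succ, st_succ, hsn, hsn', hstep1, hstep2]
      exact H.st_ne (by omega) this

lemma fr_inj : Function.Injective (fr q p) := by
  intro n n' he
  rcases Nat.lt_trichotomy n n' with h | h | h
  · exact absurd (H.fr_inj_main h he) (by simp)
  · exact h
  · exact absurd (H.fr_inj_main h he.symm) (by simp)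

end LadderHyps

end Ladder3

end AltProof
namespace AltProof

set_option linter.unusedSectionVars false

section Ladder4

variable {V : Type*} [DecidableEq V] {D : V → V → Prop} {B0 : Set V}
variable {q p : ℕ → DiPath D}

lemma chain_getD {r : DiPath D} {i : ℕ} (h : i + 1 < r.verts.length) (d d' : V) :
    D (r.verts.getD i d) (r.verts.getD (i+1) d') := by
  rw [r.verts.getD_eq_getElem d (by omega), r.verts.getD_eq_getElem d' h]
  have := List.isChain_iff_getElem.1 r.chain i (by omega)
  simpa [List.get_eq_getElem] using this

namespace LadderHyps

variable (H : LadderHyps B0 q p)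
include H

lemma edge_cond (n : ℕ) :
    if og q p n then D (fr q p n) (fr q p (n+1)) else D (fr q p (n+1)) (fr q p n) := by
  rcases hsn : st q p n with ⟨k, i, mo⟩
  have hGn := H.good_st n; rw [hsn] at hGn
  have hstep : st q p (n+1) = step q p (k, i, mo) := by rw [st_succ, hsn]
  have hfn : fr q p n = vOf q p (k, i, mo) := by rw [fr_eq, hsn]
  have hfn' : fr q p (n+1) = vOf q p (st q p (n+1)) := rfl
  have hog : og q p n = (st q p (n+1)).2.2 := rfl
  cases mo with
  | true =>
    obtain ⟨hk2, hilen⟩ := hGn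
    have hv : vOf q p (k, i, true) ∈ (q k).verts := getD_mem hilen
    by_cases h : Trig q p k (vOf q p (k, i, true))
    · have hst1 : step q p (k, i, true) =
          (h.choose, (p h.choose).verts.idxOf (vOf q p (k, i, true)) - 1, false) := by
        simp only [step]; rw [dif_pos h]
      obtain ⟨hkm, hvm, -⟩ := h.choose_spec
      have hflt : og q p n = false := by rw [hog, hstep, hst1]
      rw [hflt]
      simp only [if_false, Bool.false_eq_true]
      have hPlt : (p h.choose).verts.idxOf (vOf q p (k, i, true)) <
          (p h.choose).verts.length := List.idxOf_lt_length_iff.2 hvm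
      have hPpos : 1 ≤ (p h.choose).verts.idxOf (vOf q p (k, i, true)) := by
        by_contra h0
        have h00 : (p h.choose).verts.idxOf (vOf q p (k, i, true)) = 0 := by omega
        have hfirst : vOf q p (k, i, true) = (p h.choose).first :=
          eq_head_of_indexOf_zero (p h.choose).ne hvm h00
        have hmem : vOf q p (k, i, true) ∈ (q (h.choose + 1)).verts :=
          H.mem_qsucc_of_eq_pfirst hfirst
        have := H.uniqueQ hv hmem
        omega
      rw [hfn', hstep, hst1, hfn]
      show D ((p h.choose).verts.getD _ _) _
      have harith : (p h.choose).verts.idxOf (vOf q p (k, i, true)) - 1 + 1 =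
          (p h.choose).verts.idxOf (vOf q p (k, i, true)) := by omega
      have hch := chain_getD (r := p h.choose)
        (i := (p h.choose).verts.idxOf (vOf q p (k, i, true)) - 1)
        (by omega) ((p h.choose).first) ((p h.choose).first)
      rw [harith, getD_indexOf hvm] at hch
      exact hch
    · have hst1 : step q p (k, i, true) = (k, i + 1, true) := by
        simp only [step]; rw [dif_neg h]
      have htr : og q p n = true := by rw [hog, hstep, hst1]
      rw [htr]
      simp only [if_true]
      have hG1 := H.good_st (n+1); rw [hstep, hst1] at hG1
      obtain ⟨-, hlen1⟩ := hG1
      rw [hfn', hstep, hst1, hfn]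
      exact chain_getD hlen1 _ _
  | false =>
    obtain ⟨hm1, hilen, -⟩ := hGn
    have hv : vOf q p (k, i, false) ∈ (p k).verts := getD_mem hilen
    have hidx : (p k).verts.idxOf (vOf q p (k, i, false)) = i :=
      indexOf_getD (p k).nodup hilen
    by_cases h : Jump q k (vOf q p (k, i, false))
    · have hst1 : step q p (k, i, false) =
          (h.choose, (q h.choose).verts.idxOf (vOf q p (k, i, false)) + 1, true) := by
        simp only [step]; rw [dif_pos h]
      obtain ⟨hkj, hvj⟩ := h.choose_spec
      have htr : og q p n = true := by rw [hog, hstep, hst1]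
      rw [htr]
      simp only [if_true]
      have hG1 := H.good_st (n+1); rw [hstep, hst1] at hG1
      obtain ⟨-, hlen1⟩ := hG1
      rw [hfn', hstep, hst1, hfn]
      have hch := chain_getD (r := q h.choose)
        (i := (q h.choose).verts.idxOf (vOf q p (k, i, false))) hlen1
        ((q h.choose).first) ((q h.choose).first)
      rw [getD_indexOf hvj] at hch
      exact hch
    · have hst1 : step q p (k, i, false) = (k, i - 1, false) := by
        simp only [step]; rw [dif_neg h]
      have hflt : og q p n = false := by rw [hog, hstep, hst1]
      rw [hflt]
      simp only [if_false, Bool.false_eq_true]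
      have hi1 : 1 ≤ i := by
        by_contra h0
        have hi0 : i = 0 := by omega
        exact h ⟨k + 1, by omega, by rw [hi0, vOf_F_zero]; exact H.hpq k⟩
      rw [hfn', hstep, hst1, hfn]
      have harith : i - 1 + 1 = i := by omega
      have hch := chain_getD (r := p k) (i := i - 1) (by omega)
        ((p k).first) ((p k).first)
      rw [harith] at hch
      exact hch

lemma exists_og_true (n : ℕ) : ∃ n' ≥ n, og q p n' = true := by
  by_contra hc
  push_neg at hc
  have hall : ∀ n' ≥ n, (st q p (n'+1)).2.2 = false := by
    intro n' hn'
    have h2 : og q p n' = false := by simpa using hc n' hn'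
    exact h2
  rcases hsn : st q p (n+1) with ⟨m, i, mo⟩
  have hmo : mo = false := by have := hall n le_rfl; rw [hsn] at this; exact this
  subst hmo
  have key : ∀ t, st q p (n+1+t) = (m, i - t, false) ∧ t ≤ i := by
    intro t
    induction t with
    | zero => exact ⟨by simpa using hsn, Nat.zero_le _⟩
    | succ t iht =>
      obtain ⟨hst, hti⟩ := iht
      have hstep : st q p (n+1+t+1) = step q p (m, i - t, false) := by rw [st_succ, hst]
      have hG := H.good_st (n+1+t); rw [hst] at hG
      obtain ⟨hm1, hlen, -⟩ := hG
      by_cases h : Jump q m (vOf q p (m, i - t, false))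
      · exfalso
        have hst1 : step q p (m, i - t, false) =
            (h.choose, (q h.choose).verts.idxOf (vOf q p (m, i - t, false)) + 1, true) := by
          simp only [step]; rw [dif_pos h]
        have := hall (n+1+t) (by omega)
        rw [show n+1+t+1 = n+1+t+1 from rfl, hstep, hst1] at this
        simp at this
      · have hst1 : step q p (m, i - t, false) = (m, i - t - 1, false) := by
          simp only [step]; rw [dif_neg h]
        have hpos : 1 ≤ i - t := by
          by_contra h0
          have hi0 : i - t = 0 := by omega
          exact h ⟨m + 1, by omega, by rw [hi0, vOf_F_zero]; exact H.hpq m⟩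
        refine ⟨?_, by omega⟩
        rw [show n+1+(t+1) = n+1+t+1 from by omega, hstep, hst1,
          show i - t - 1 = i - (t+1) from by omega]
  have := (key (i+1)).2
  omega

lemma exists_og_false (n : ℕ) : ∃ n' ≥ n, og q p n' = false := by
  by_contra hc
  push_neg at hc
  have hall : ∀ n' ≥ n, (st q p (n'+1)).2.2 = true := by
    intro n' hn'
    have h2 : og q p n' = true := by simpa using hc n' hn'
    exact h2
  rcases hsn : st q p (n+1) with ⟨k, i, mo⟩
  have hmo : mo = true := by have := hall n le_rfl; rw [hsn] at this; exact this
  subst hmo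
  have key : ∀ t, st q p (n+1+t) = (k, i + t, true) := by
    intro t
    induction t with
    | zero => simpa using hsn
    | succ t iht =>
      have hstep : st q p (n+1+t+1) = step q p (k, i + t, true) := by rw [st_succ, iht]
      by_cases h : Trig q p k (vOf q p (k, i + t, true))
      · exfalso
        have hst1 : step q p (k, i + t, true) =
            (h.choose, (p h.choose).verts.idxOf (vOf q p (k, i + t, true)) - 1, false) := by
          simp only [step]; rw [dif_pos h]
        have := hall (n+1+t) (by omega)
        rw [hstep, hst1] at this
        simp at this
      · have hst1 : step q p (k, i + t, true) = (k, i + t + 1, true) := by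
          simp only [step]; rw [dif_neg h]
        rw [show n+1+(t+1) = n+1+t+1 from by omega, hstep, hst1,
          show i + t + 1 = i + (t+1) from by omega]
  have hG := H.good_st (n+1+(q k).verts.length)
  rw [key ((q k).verts.length)] at hG
  obtain ⟨-, hlen⟩ := hG
  omega

open Classical in
lemma switch_infinite (N : ℕ) : ∃ k ≥ N, og q p k = true ∧ og q p (k+1) = false := by
  obtain ⟨t, ht, htrue⟩ := H.exists_og_true N
  obtain ⟨u0, hu0, hfalse⟩ := H.exists_og_false (t+1)
  have hS : ∃ u, t < u ∧ og q p u = false := ⟨u0, by omega, hfalse⟩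
  classical
  set u := Nat.find hS with hu_def
  obtain ⟨hu1, hu2⟩ := Nat.find_spec hS
  refine ⟨u - 1, by omega, ?_, ?_⟩
  · rcases Nat.eq_or_lt_of_le (Nat.succ_le_of_lt hu1) with he | hlt
    · rw [show u - 1 = t from by omega]; exact htrue
    · have hmin := Nat.find_min hS (m := u - 1) (by omega)
      push_neg at hmin
      have h3 := hmin (by omega)
      simpa using h3
  · rw [show u - 1 + 1 = u from by omega]
    exact hu2

end LadderHyps

end Ladder4

end AltProof
namespace AltProof

set_option linter.unusedSectionVars false

section Ladder5

variable {V : Type*} [DecidableEq V] {D : V → V → Prop} {B0 : Set V}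
variable (q p : ℕ → DiPath D)

/-- the walk enters `p m` (descending) at time `t` -/
def entersP (t m : ℕ) : Prop :=
  (st q p t).2.2 = true ∧ (st q p (t+1)).2.2 = false ∧ (st q p (t+1)).1 = m

variable {q p}

namespace LadderHyps

variable (H : LadderHyps B0 q p)
include H

lemma pidx_pos {k m : ℕ} {v : V} (hkm : k ≤ m) (hv : v ∈ (q k).verts)
    (hvm : v ∈ (p m).verts) : 1 ≤ (p m).verts.idxOf v := by
  by_contra h0
  have h00 : (p m).verts.idxOf v = 0 := by omega
  have hfirst : v = (p m).first := eq_head_of_indexOf_zero (p m).ne hvm h00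
  have := H.uniqueQ hv (H.mem_qsucc_of_eq_pfirst hfirst)
  omega

lemma enters_spec {t m : ℕ} (h : entersP q p t m) :
    fr q p t ∈ (p m).verts ∧ Clean q p m (fr q p t) ∧ 2 ≤ m ∧
      st q p (t+1) = (m, (p m).verts.idxOf (fr q p t) - 1, false) ∧
      1 ≤ (p m).verts.idxOf (fr q p t) ∧ (st q p t).1 ≤ m := by
  obtain ⟨h1, h2, h3⟩ := h
  rcases hsn : st q p t with ⟨k, i, mo⟩
  have hmo : mo = true := by rw [hsn] at h1; exact h1
  subst hmo
  have hfn : fr q p t = vOf q p (k, i, true) := by rw [fr_eq, hsn]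
  have hG := H.good_st t; rw [hsn] at hG
  obtain ⟨hk2, hilen⟩ := hG
  have hvq : fr q p t ∈ (q k).verts := by rw [hfn]; exact getD_mem hilen
  have hstep : st q p (t+1) = step q p (k, i, true) := by rw [st_succ, hsn]
  by_cases htr : Trig q p k (vOf q p (k, i, true))
  · have hst1 : step q p (k, i, true) =
        (htr.choose, (p htr.choose).verts.idxOf (vOf q p (k, i, true)) - 1, false) := by
      simp only [step]; rw [dif_pos htr]
    obtain ⟨hkm, hvm, hclean⟩ := htr.choose_spec
    have hcc : htr.choose = m := by
      rw [hstep, hst1] at h3; exact h3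
    rw [hcc] at hkm hvm hclean hst1
    rw [← hfn] at hvm hclean
    have hpos := H.pidx_pos hkm hvq hvm
    refine ⟨hvm, hclean, by omega, ?_, hpos, by exact hkm⟩
    rw [hstep, hst1, hfn]
  · exfalso
    have hst1 : step q p (k, i, true) = (k, i + 1, true) := by
      simp only [step]; rw [dif_neg htr]
    rw [hstep, hst1] at h2
    simp at h2

lemma enters_unique_main {t t' m : ℕ} (h : entersP q p t m) (h' : entersP q p t' m)
    (hlt : t < t') : False := by
  obtain ⟨-, -, -, hst1, -, -⟩ := H.enters_spec h
  obtain ⟨-, -, -, -, -, hle'⟩ := H.enters_spec h'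
  rcases hsn' : st q p t' with ⟨k', i', mo'⟩
  have hmo' : mo' = true := by have := h'.1; rw [hsn'] at this; exact this
  subst hmo'
  have hk'm : k' ≤ m := by rw [hsn'] at hle'; exact hle'
  rcases Nat.eq_or_lt_of_le (Nat.succ_le_of_lt hlt) with he | hlt2
  · rw [← he] at hsn'
    rw [hst1] at hsn'
    simp at hsn'
  · have hphi := H.phi_st_mono hlt2
    rw [hst1, hsn'] at hphi
    rcases hphi with h1 | ⟨h1, -⟩ <;> simp only [pass] at h1 <;> omega

lemma enters_unique {t t' m : ℕ} (h : entersP q p t m) (h' : entersP q p t' m) : t = t' := by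
  rcases Nat.lt_trichotomy t t' with hlt | he | hlt
  · exact absurd (H.enters_unique_main h h' hlt) (by simp)
  · exact he
  · exact absurd (H.enters_unique_main h' h hlt) (by simp)

lemma descent_bound : ∀ t m i, st q p t = (m, i, false) → 2 ≤ m →
    ∃ t0, t0 < t ∧ entersP q p t0 m ∧ i < (p m).verts.idxOf (fr q p t0) := by
  intro t
  induction t with
  | zero =>
    intro m i h0 h2
    rw [st_zero] at h0
    simp only [Prod.mk.injEq] at h0
    omega
  | succ t ih =>
    intro m i hst h2
    rcases hsn : st q p t with ⟨k, j, mo⟩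
    have hstep : st q p (t+1) = step q p (k, j, mo) := by rw [st_succ, hsn]
    have hG := H.good_st t; rw [hsn] at hG
    cases mo with
    | true =>
      obtain ⟨hk2, hjlen⟩ := hG
      by_cases htr : Trig q p k (vOf q p (k, j, true))
      · have hst1 : step q p (k, j, true) =
            (htr.choose, (p htr.choose).verts.idxOf (vOf q p (k, j, true)) - 1, false) := by
          simp only [step]; rw [dif_pos htr]
        have heq : (htr.choose, (p htr.choose).verts.idxOf (vOf q p (k, j, true)) - 1,
            (false : Bool)) = (m, i, false) := by rw [← hst1, ← hstep, hst]
        simp only [Prod.mk.injEq] at heq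
        obtain ⟨hcm, hci, -⟩ := heq
        obtain ⟨hkm, hvm, hclean⟩ := htr.choose_spec
        rw [hcm] at hkm hvm
        have hfn : fr q p t = vOf q p (k, j, true) := by rw [fr_eq, hsn]
        have hvq : fr q p t ∈ (q k).verts := by rw [hfn]; exact getD_mem hjlen
        have hpos := H.pidx_pos hkm hvq (by rw [hfn]; exact hvm)
        refine ⟨t, by omega, ⟨by rw [hsn], ?_, ?_⟩, ?_⟩
        · rw [hstep, hst1]
        · rw [hstep, hst1]; exact hcm
        · rw [hfn]
          rw [hcm] at hci
          rw [hfn] at hpos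
          omega
      · have hst1 : step q p (k, j, true) = (k, j + 1, true) := by
          simp only [step]; rw [dif_neg htr]
        rw [hstep, hst1] at hst
        simp at hst
    | false =>
      obtain ⟨hm1, hjlen, -⟩ := hG
      by_cases hj : Jump q k (vOf q p (k, j, false))
      · have hst1 : step q p (k, j, false) =
            (hj.choose, (q hj.choose).verts.idxOf (vOf q p (k, j, false)) + 1, true) := by
          simp only [step]; rw [dif_pos hj]
        rw [hstep, hst1] at hst
        simp at hst
      · have hst1 : step q p (k, j, false) = (k, j - 1, false) := by
          simp only [step]; rw [dif_neg hj]
        have heq : (k, j - 1, (false : Bool)) = (m, i, false) := by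
          rw [← hst1, ← hstep, hst]
        simp only [Prod.mk.injEq] at heq
        obtain ⟨hkm, hji, -⟩ := heq
        have hpos : 1 ≤ j := by
          by_contra h0
          have hj0 : j = 0 := by omega
          exact hj ⟨k + 1, by omega, by rw [hj0, vOf_F_zero]; exact H.hpq k⟩
        obtain ⟨t0, ht0, hent, hbound⟩ := ih m j (by rw [hsn, hkm]) h2
        exact ⟨t0, by omega, hent, by omega⟩

lemma tail_claim {t0 m : ℕ} (he : entersP q p t0 m) :
    ∀ t, fr q p t ∈ (p m).verts →
      (p m).verts.idxOf (fr q p t0) ≤ (p m).verts.idxOf (fr q p t) →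
      fr q p t = fr q p t0 := by
  intro t hmem hge
  obtain ⟨hv0, hclean0, hm2, hst0, hpos0, -⟩ := H.enters_spec he
  rcases hsn : st q p t with ⟨k, i, mo⟩
  have hfn : fr q p t = vOf q p (k, i, mo) := by rw [fr_eq, hsn]
  have hG := H.good_st t; rw [hsn] at hG
  cases mo with
  | false =>
    exfalso
    obtain ⟨hm1, hilen, -⟩ := hG
    have hvp : fr q p t ∈ (p k).verts := by rw [hfn]; exact getD_mem hilen
    have hkk : k = m := H.uniqueP hvp hmem
    subst hkk
    obtain ⟨t1, ht1, hent1, hbound⟩ := H.descent_bound t k i hsn hm2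
    have ht10 : t1 = t0 := H.enters_unique hent1 he
    subst ht10
    have hidx : (p k).verts.idxOf (fr q p t) = i := by
      rw [hfn]; exact indexOf_getD (p k).nodup hilen
    omega
  | true =>
    obtain ⟨hk2, hilen⟩ := hG
    have hvq : fr q p t ∈ (q k).verts := by rw [hfn]; exact getD_mem hilen
    by_cases heq : (p m).verts.idxOf (fr q p t) = (p m).verts.idxOf (fr q p t0)
    · exact eq_of_indexOf_eq hmem hv0 heq
    · exfalso
      have hlt : (p m).verts.idxOf (fr q p t0) < (p m).verts.idxOf (fr q p t) := by omega
      by_cases hkm : k ≤ m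
      · have hcleant : Clean q p m (fr q p t) := by
          intro w hw hgt j hj hwq
          exact hclean0 w hw (by omega) j hj hwq
        have htrig : Trig q p k (vOf q p (k, i, true)) := by
          rw [← hfn]
          exact ⟨m, hkm, hmem, hcleant⟩
        have hst1 : step q p (k, i, true) =
            (htrig.choose, (p htrig.choose).verts.idxOf (vOf q p (k, i, true)) - 1,
              false) := by
          simp only [step]; rw [dif_pos htrig]
        have hcc : htrig.choose = m :=
          H.uniqueP htrig.choose_spec.2.1 (by rw [hfn] at hmem; exact hmem)
        have hent : entersP q p t m := by
          refine ⟨by rw [hsn], ?_, ?_⟩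
          · rw [st_succ, hsn, hst1]
          · rw [st_succ, hsn, hst1]; exact hcc
        have ht0 : t = t0 := H.enters_unique hent he
        rw [ht0] at heq
        exact heq rfl
      · exact hclean0 (fr q p t) hmem hlt k (by omega) hvq

end LadderHyps

end Ladder5

end AltProof
namespace AltProof

set_option linter.unusedSectionVars false

section Ladder6

variable {V : Type*} [DecidableEq V] {D : V → V → Prop} {B0 : Set V}
variable {q p : ℕ → DiPath D}

lemma _root_.DiPath.first_eq_getElem (r : DiPath D) :
    r.first = r.verts[0]'r.length_pos := by
  rw [DiPath.first, List.head_eq_getElem]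

lemma _root_.DiPath.last_eq_getElem (r : DiPath D) :
    r.last = r.verts[r.verts.length - 1]'(by have := r.length_pos; omega) := by
  rw [DiPath.last, List.getLast_eq_getElem]

lemma mem_drop_subset {l : List V} {J : ℕ} {v : V} (h : v ∈ l.drop J) : v ∈ l :=
  (List.drop_sublist J l).subset h

lemma indexOf_ge_of_mem_drop {l : List V} (hnd : l.Nodup) {J : ℕ} {v : V}
    (h : v ∈ l.drop J) : J ≤ l.idxOf v := by
  obtain ⟨i, hi, hv⟩ := List.mem_iff_getElem.1 h
  have hlen : J + i < l.length := by
    have : (l.drop J).length = l.length - J := List.length_drop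
    omega
  have : (l.drop J)[i] = l[J + i] := List.getElem_drop ..
  rw [this] at hv
  rw [← hv, List.Nodup.idxOf_getElem hnd]
  omega

/-- a switch of the ray: forward then backward -/
def isSw (q p : ℕ → DiPath D) (n : ℕ) : Prop :=
  og q p n = true ∧ og q p (n+1) = false

lemma isSw_enters {n : ℕ} (h : isSw q p n) : entersP q p (n+1) ((st q p (n+2)).1) :=
  ⟨h.1, h.2, rfl⟩

/-- attachment path of a switch: the forward tail of the `p`-path entered there -/
noncomputable def tailPath (H : LadderHyps B0 q p) (n : ℕ) (hn : isSw q p n) : DiPath D :=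
  { verts := (p ((st q p (n+2)).1)).verts.drop
      ((p ((st q p (n+2)).1)).verts.idxOf (fr q p (n+1)))
    ne := by
      have hs := H.enters_spec (isSw_enters hn)
      have hlt := List.idxOf_lt_length_iff.2 hs.1
      intro hcon
      have := List.length_drop (i := (p ((st q p (n+2)).1)).verts.idxOf (fr q p (n+1)))
        (l := (p ((st q p (n+2)).1)).verts)
      rw [hcon] at this
      simp at this
      omega
    nodup := (List.drop_sublist _ _).nodup (p _).nodup
    chain := (p _).chain.drop _ }

namespace LadderHyps

variable (H : LadderHyps B0 q p)
include H

lemma tailPath_len {n : ℕ} (hn : isSw q p n) :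
    (tailPath H n hn).verts.length =
      (p ((st q p (n+2)).1)).verts.length -
        (p ((st q p (n+2)).1)).verts.idxOf (fr q p (n+1)) :=
  List.length_drop

lemma tailPath_first {n : ℕ} (hn : isSw q p n) :
    (tailPath H n hn).first = fr q p (n+1) := by
  have hs := H.enters_spec (isSw_enters hn)
  have hlt := List.idxOf_lt_length_iff.2 hs.1
  rw [DiPath.first_eq_getElem]
  have h1 : (tailPath H n hn).verts[0]'((tailPath H n hn).length_pos) =
      (p ((st q p (n+2)).1)).verts[(p ((st q p (n+2)).1)).verts.idxOf (fr q p (n+1)) + 0]'(by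
        omega) := List.getElem_drop ..
  rw [h1]
  have := List.getElem_idxOf (xs := (p ((st q p (n+2)).1)).verts) (x := fr q p (n+1)) hlt
  simpa using this

lemma tailPath_last {n : ℕ} (hn : isSw q p n) :
    (tailPath H n hn).last = (q ((st q p (n+2)).1)).last := by
  have hs := H.enters_spec (isSw_enters hn)
  have hlt := List.idxOf_lt_length_iff.2 hs.1
  have hld := H.tailPath_len hn
  rw [DiPath.last_eq_getElem]
  have h1 : (tailPath H n hn).verts[(tailPath H n hn).verts.length - 1]'(by
        have := (tailPath H n hn).length_pos; omega) =
      (p ((st q p (n+2)).1)).verts[(p ((st q p (n+2)).1)).verts.idxOf (fr q p (n+1)) +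
        ((tailPath H n hn).verts.length - 1)]'(by
        have := (tailPath H n hn).length_pos; rw [hld] at this ⊢; omega) :=
    List.getElem_drop ..
  rw [h1, ← H.hlast, DiPath.last_eq_getElem]
  congr 1
  rw [hld]
  have := (tailPath H n hn).length_pos
  rw [hld] at this
  omega

lemma tailPath_subset {n : ℕ} (hn : isSw q p n) {v : V}
    (hv : v ∈ (tailPath H n hn).verts) : v ∈ (p ((st q p (n+2)).1)).verts :=
  mem_drop_subset hv

lemma tailPath_ray {n : ℕ} (hn : isSw q p n) {v : V}
    (hv : v ∈ (tailPath H n hn).verts) (hr : v ∈ Set.range (fr q p)) :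
    v = fr q p (n+1) := by
  obtain ⟨t, rfl⟩ := hr
  exact H.tail_claim (isSw_enters hn) t (H.tailPath_subset hn hv)
    (indexOf_ge_of_mem_drop (p _).nodup hv)

lemma fr_zero : fr q p 0 = (q 1).last := by
  rw [fr_eq, st_zero]
  show vOf q p (1, (p 1).verts.length - 1, false) = _
  rw [vOf_F_last, H.hlast]

lemma ladder_comb : ContainsAltComb D B0 := by
  classical
  refine ⟨fr q p, og q p,
    insert (trivPath D ((q 1).last)) {r | ∃ (n : ℕ) (hn : isSw q p n), r = tailPath H n hn},
    H.fr_inj, H.edge_cond, H.switch_infinite, ?_, ?_, ?_⟩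
  · constructor
    · rintro r (rfl | ⟨n, hn, rfl⟩)
      · exact H.hbB 1
      · rw [H.tailPath_last hn]; exact H.hbB _
    · rintro r hr s hs hne
      rw [Set.disjoint_left]
      intro v hvr hvs
      rw [mem_vertSet] at hvr hvs
      rcases hr with rfl | ⟨n, hn, rfl⟩
      · rcases hs with rfl | ⟨n', hn', rfl⟩
        · exact hne rfl
        · simp only [trivPath_verts, List.mem_singleton] at hvr
          subst hvr
          have h1 := H.tailPath_subset hn' hvs
          have h2 : (q 1).last ∈ (p 1).verts := H.mem_p_of_eq_qlast rfl
          have h3 := H.uniqueP h1 h2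
          have h4 := (H.enters_spec (isSw_enters hn')).2.2.1
          omega
      · rcases hs with rfl | ⟨n', hn', rfl⟩
        · simp only [trivPath_verts, List.mem_singleton] at hvs
          subst hvs
          have h1 := H.tailPath_subset hn hvr
          have h2 : (q 1).last ∈ (p 1).verts := H.mem_p_of_eq_qlast rfl
          have h3 := H.uniqueP h1 h2
          have h4 := (H.enters_spec (isSw_enters hn)).2.2.1
          omega
        · have h1 := H.tailPath_subset hn hvr
          have h2 := H.tailPath_subset hn' hvs
          have h3 := H.uniqueP h1 h2
          have h4 : n + 1 = n' + 1 :=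
            H.enters_unique (isSw_enters hn) (h3 ▸ isSw_enters hn')
          have : n = n' := by omega
          subst this
          exact hne rfl
  · ext v
    simp only [Ini, Set.mem_setOf_eq, Set.mem_insert_iff]
    constructor
    · rintro ⟨r, hr, rfl⟩
      rcases hr with rfl | ⟨n, hn, rfl⟩
      · left; rw [trivPath_first, H.fr_zero]
      · right
        exact ⟨n, hn.1, hn.2, H.tailPath_first hn⟩
    · rintro (rfl | ⟨n, h1, h2, rfl⟩)
      · exact ⟨trivPath D ((q 1).last), Or.inl rfl, by rw [trivPath_first, H.fr_zero]⟩
      · exact ⟨tailPath H n ⟨h1, h2⟩, Or.inr ⟨n, ⟨h1, h2⟩, rfl⟩, H.tailPath_first ⟨h1, h2⟩⟩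
  · rintro r (rfl | ⟨n, hn, rfl⟩) v hv hrange
    · rw [mem_vertSet, trivPath_verts, List.mem_singleton] at hv
      subst hv
      rfl
    · rw [mem_vertSet] at hv
      rw [H.tailPath_ray hn hv hrange, H.tailPath_first hn]

end LadderHyps

end Ladder6

end AltProof
namespace AltProof

set_option linter.unusedSectionVars false

section Orbit

variable {V : Type*} {D : V → V → Prop} {B0 : Set V}

lemma exists_comb {P Q : Set (DiPath D)} (hP : IsLinkage D B0 P) (hTer : Ter P = B0)
    (hQ : IsLinkage D B0 Q) (hsub : Ini P ⊆ Ini Q) {v0 : V} (hv0 : v0 ∈ Ini Q)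
    (hv0B : v0 ∉ Ini P) : ContainsAltComb D B0 := by
  classical
  set fQ : V → DiPath D := fun w =>
    if h : ∃ r, r ∈ Q ∧ r.first = w then h.choose else trivPath D w with hfQ
  set fP : V → DiPath D := fun w =>
    if h : ∃ r, r ∈ P ∧ r.last = w then h.choose else trivPath D w with hfP
  have fQ_spec : ∀ w ∈ Ini Q, fQ w ∈ Q ∧ (fQ w).first = w := by
    intro w hw
    obtain ⟨r, hr, hrf⟩ := hw
    have h : ∃ r, r ∈ Q ∧ r.first = w := ⟨r, hr, hrf⟩
    rw [hfQ]
    simp only [dif_pos h]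
    exact h.choose_spec
  have fP_spec : ∀ w ∈ Ter P, fP w ∈ P ∧ (fP w).last = w := by
    intro w hw
    obtain ⟨r, hr, hrf⟩ := hw
    have h : ∃ r, r ∈ P ∧ r.last = w := ⟨r, hr, hrf⟩
    rw [hfP]
    simp only [dif_pos h]
    exact h.choose_spec
  set x : ℕ → V := fun n => Nat.rec v0 (fun _ xv => (fP ((fQ xv).last)).first) n with hx
  have x_zero : x 0 = v0 := rfl
  have x_succ : ∀ n, x (n+1) = (fP ((fQ (x n)).last)).first := fun n => rfl
  set qq : ℕ → DiPath D := fun n => fQ (x n) with hqq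
  set pp : ℕ → DiPath D := fun n => fP ((qq n).last) with hpp
  -- basic invariants
  have hxQ : ∀ n, x n ∈ Ini Q := by
    intro n
    induction n with
    | zero => exact hv0
    | succ n ih =>
      have h1 := fQ_spec (x n) ih
      have h2 : (qq n).last ∈ B0 := hQ.1 _ h1.1
      rw [← hTer] at h2
      have h3 := fP_spec _ h2
      have h4 : x (n+1) ∈ Ini P := ⟨pp n, h3.1, (x_succ n).symm⟩
      exact hsub h4
  have qq_mem : ∀ n, qq n ∈ Q := fun n => (fQ_spec (x n) (hxQ n)).1
  have qq_first : ∀ n, (qq n).first = x n := fun n => (fQ_spec (x n) (hxQ n)).2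
  have qq_lastB : ∀ n, (qq n).last ∈ B0 := fun n => hQ.1 _ (qq_mem n)
  have pp_mem : ∀ n, pp n ∈ P := fun n => (fP_spec _ (hTer ▸ qq_lastB n)).1
  have pp_last : ∀ n, (pp n).last = (qq n).last :=
    fun n => (fP_spec _ (hTer ▸ qq_lastB n)).2
  have pp_first : ∀ n, (pp n).first = x (n+1) := fun n => (x_succ n).symm
  have xP : ∀ n, x (n+1) ∈ Ini P := fun n => ⟨pp n, pp_mem n, pp_first n⟩
  -- injectivity of x
  have uniq_Q : ∀ r s : DiPath D, r ∈ Q → s ∈ Q → ∀ w, w ∈ r.verts → w ∈ s.verts → r = s := by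
    intro r s hr hs w hwr hws
    by_contra hne
    exact Set.disjoint_left.1 (hQ.2 r hr s hs hne) hwr hws
  have uniq_P : ∀ r s : DiPath D, r ∈ P → s ∈ P → ∀ w, w ∈ r.verts → w ∈ s.verts → r = s := by
    intro r s hr hs w hwr hws
    by_contra hne
    exact Set.disjoint_left.1 (hP.2 r hr s hs hne) hwr hws
  have x_inj : ∀ a c, x a = x c → a = c := by
    intro a
    induction a with
    | zero =>
      intro c h
      cases c with
      | zero => rfl
      | succ c' =>
        exfalso
        have h2 := xP c'
        rw [← h] at h2
        exact hv0B h2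
    | succ a ih =>
      intro c h
      cases c with
      | zero =>
        exfalso
        have h2 := xP a
        rw [h] at h2
        exact hv0B h2
      | succ c' =>
        have h1 : (pp a).first = (pp c').first := by rw [pp_first, pp_first, h]
        have h2 : pp a = pp c' := by
          apply uniq_P _ _ (pp_mem a) (pp_mem c') ((pp a).first)
          · exact (pp a).first_mem
          · rw [h1]; exact (pp c').first_mem
        have h3 : (qq a).last = (qq c').last := by rw [← pp_last, ← pp_last, h2]
        have h4 : qq a = qq c' := by
          apply uniq_Q _ _ (qq_mem a) (qq_mem c') ((qq a).last)
          · exact (qq a).last_mem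
          · rw [h3]; exact (qq c').last_mem
        have h5 : x a = x c' := by rw [← qq_first, ← qq_first, h4]
        rw [ih c' h5]
  -- ladder hypotheses
  have H : LadderHyps B0 qq pp := by
    constructor
    · exact pp_last
    · intro n
      rw [pp_first n, ← qq_first (n+1)]
      exact (qq (n+1)).first_mem
    · intro i j hij
      have hne : qq i ≠ qq j := by
        intro he
        apply hij
        apply x_inj
        rw [← qq_first, ← qq_first, he]
      exact hQ.2 _ (qq_mem i) _ (qq_mem j) hne
    · intro i j hij
      have hne : pp i ≠ pp j := by
        intro he
        have h2 : x (i+1) = x (j+1) := by rw [← pp_first, ← pp_first, he]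
        have h3 := x_inj (i+1) (j+1) h2
        omega
      exact hP.2 _ (pp_mem i) _ (pp_mem j) hne
    · exact qq_lastB
  exact H.ladder_comb

end Orbit

end AltProof
/-- In a dimaze without alternating combs, maximal linkable sets are exactly
the sets linkable onto the exits. -/
theorem noAC_base_criterion (D : V → V → Prop) (B0 : Set V)
    (hD : IsDimaze D B0) (hAC : ¬ ContainsAltComb D B0) (B : Set V) :
    MaximalIn (Linkable D B0) B ↔ LinkableOnto D B0 B := by
  classical
  constructor
  · exact AltProof.maximal_imp_onto hD B
  · rintro ⟨P, hP, hIniP, hTerP⟩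
    refine ⟨⟨P, hP, hIniP⟩, ?_⟩
    intro J hJ hBJ
    obtain ⟨Q, hQ, hIniQ⟩ := hJ
    refine Set.Subset.antisymm ?_ hBJ
    intro v hv
    by_contra hvB
    exact hAC (AltProof.exists_comb hP hTerP hQ
      (by rw [hIniP, hIniQ]; exact hBJ)
      (by rw [hIniQ]; exact hv)
      (by rw [hIniP]; exact hvB))
end

section
/- If a dimaze contains an alternating comb, then the set of vertices of out-degree 2 on the comb together with the exits of the dimaze not on the comb is a set that is linkable onto the exits but is not a maximal linkable set. -/
open Set

universe u

variable {V : Type*}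

/-- The edge relation of the alternating comb given by ray `f`, orientations `o`
and linking paths `P`. -/
def CombAdj (D : V → V → Prop) (f : ℕ → V) (o : ℕ → Bool) (P : Set (DiPath D))
    (a b : V) : Prop :=
  (∃ n, (o n = true ∧ a = f n ∧ b = f (n+1)) ∨ (o n = false ∧ a = f (n+1) ∧ b = f n)) ∨
  (a, b) ∈ LinkEdges P

/-- The vertex set of the alternating comb. -/
def CombVerts (D : V → V → Prop) (f : ℕ → V) (P : Set (DiPath D)) : Set V :=
  Set.range f ∪ LinkVerts P

namespace CombAux
variable {D : V → V → Prop}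

theorem dipath_eq {p q : DiPath D} (h : p.verts = q.verts) : p = q := by
  cases p; cases q; simp only at h; subst h; rfl

theorem nodup_tail {l : List V} (h : l.Nodup) : l.tail.Nodup := by
  cases l with
  | nil => simp
  | cons x xs => exact h.of_cons

theorem zip_rel {l : List V} (hc : l.Chain' D) {a b : V} (h : (a, b) ∈ l.zip l.tail) :
    D a b := by
  induction l with
  | nil => simp at h
  | cons x xs ih =>
    cases xs with
    | nil => simp at h
    | cons y ys =>
      unfold List.Chain' at hc; rw [List.isChain_cons_cons] at hc
      simp only [List.tail_cons, List.zip_cons_cons, List.mem_cons] at h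
      rcases h with h | h
      · obtain ⟨rfl, rfl⟩ := Prod.mk.injEq .. ▸ h
        exact hc.1
      · exact ih hc.2 (by simpa using h)

theorem zip_succ_unique {l : List V} (hl : l.Nodup) {a b c : V}
    (h1 : (a, b) ∈ l.zip l.tail) (h2 : (a, c) ∈ l.zip l.tail) : b = c := by
  induction l with
  | nil => simp at h1
  | cons x xs ih =>
    cases xs with
    | nil => simp at h1
    | cons y ys =>
      simp only [List.tail_cons, List.zip_cons_cons, List.mem_cons] at h1 h2
      rcases h1 with h1 | h1 <;> rcases h2 with h2 | h2
      · rw [Prod.mk.injEq] at h1 h2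
        exact h1.2.trans h2.2.symm
      · rw [Prod.mk.injEq] at h1
        exact absurd (h1.1 ▸ (List.of_mem_zip h2).1) ((List.nodup_cons.mp hl).1)
      · rw [Prod.mk.injEq] at h2
        exact absurd (h2.1 ▸ (List.of_mem_zip h1).1) ((List.nodup_cons.mp hl).1)
      · exact ih hl.of_cons (by simpa using h1) (by simpa using h2)


theorem first_mem (p : DiPath D) : p.first ∈ p.verts := List.head_mem p.ne

theorem last_mem (p : DiPath D) : p.last ∈ p.verts := List.getLast_mem p.ne

/-- every non-last vertex of a list has a successor in the zip. -/
theorem exists_succ_of_ne_getLast : ∀ {l : List V} (h : l ≠ []) {v : V}, v ∈ l →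
    v ≠ l.getLast h → ∃ w, (v, w) ∈ l.zip l.tail := by
  intro l
  induction l with
  | nil => simp
  | cons x xs ih =>
    intro h v hv hne
    cases xs with
    | nil =>
      simp at hv
      simp [hv] at hne
    | cons y ys =>
      rw [List.mem_cons] at hv
      rcases hv with rfl | hv
      · exact ⟨y, by simp⟩
      · have hne' : v ≠ (y :: ys).getLast (by simp) := by
          rwa [List.getLast_cons (by simp)] at hne
        obtain ⟨w, hw⟩ := ih (by simp) hv hne'
        exact ⟨w, by simp only [List.tail_cons, List.zip_cons_cons, List.mem_cons]; right; simpa using hw⟩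

theorem head_zip_mem {x y : V} {ys : List V} :
    (x, y) ∈ (x :: y :: ys).zip (x :: y :: ys).tail := by simp

theorem getLast?_cons' {a : V} {l : List V} (h : l ≠ []) :
    (a :: l).getLast? = l.getLast? := by
  cases l with
  | nil => simp at h
  | cons b bs => simp

/-- ascending ray list `[f t, f (t+1), ..., f (t+n)]`. -/
def ascL (f : ℕ → V) (t : ℕ) : ℕ → List V
  | 0 => [f t]
  | n + 1 => f t :: ascL f (t + 1) n

@[simp] theorem ascL_ne (f : ℕ → V) (t n : ℕ) : ascL f t n ≠ [] := by
  cases n <;> simp [ascL]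

@[simp] theorem ascL_head? (f : ℕ → V) (t n : ℕ) : (ascL f t n).head? = some (f t) := by
  cases n <;> simp [ascL]

theorem ascL_getLast? (f : ℕ → V) (t n : ℕ) : (ascL f t n).getLast? = some (f (t + n)) := by
  induction n generalizing t with
  | zero => simp [ascL]
  | succ n ih =>
    rw [ascL, getLast?_cons' (ascL_ne f (t+1) n)]
    rw [ih (t+1)]
    congr 2
    omega

theorem ascL_mem {f : ℕ → V} {t n : ℕ} {v : V} :
    v ∈ ascL f t n ↔ ∃ i, i ≤ n ∧ v = f (t + i) := by
  induction n generalizing t with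
  | zero => constructor
            · intro h; exact ⟨0, le_refl 0, by simpa [ascL] using h⟩
            · rintro ⟨i, hi, rfl⟩; simp [ascL]; congr 1; omega
  | succ n ih =>
    rw [ascL, List.mem_cons, ih]
    constructor
    · rintro (rfl | ⟨i, hi, rfl⟩)
      · exact ⟨0, by omega, by simp⟩
      · exact ⟨i + 1, by omega, by congr 1; omega⟩
    · rintro ⟨i, hi, rfl⟩
      cases i with
      | zero => left; simp
      | succ i => right; exact ⟨i, by omega, by congr 1; omega⟩

theorem ascL_nodup {f : ℕ → V} (hinj : Function.Injective f) (t n : ℕ) :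
    (ascL f t n).Nodup := by
  induction n generalizing t with
  | zero => simp [ascL]
  | succ n ih =>
    rw [ascL, List.nodup_cons]
    refine ⟨fun h => ?_, ih (t+1)⟩
    obtain ⟨i, hi, he⟩ := ascL_mem.mp h
    have := hinj he
    omega

theorem ascL_chain' {f : ℕ → V} {t n : ℕ}
    (h : ∀ i, t ≤ i → i < t + n → D (f i) (f (i + 1))) : (ascL f t n).Chain' D := by
  induction n generalizing t with
  | zero => exact List.isChain_singleton _
  | succ n ih =>
    unfold List.Chain'; rw [ascL, List.isChain_cons]
    constructor
    · intro y hy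
      rw [ascL_head?] at hy
      cases hy
      exact h t le_rfl (by omega)
    · exact ih (fun i h1 h2 => h i (by omega) (by omega))

/-- descending ray list `[f (t+n), ..., f (t+1), f t]`. -/
def descL (f : ℕ → V) (t : ℕ) : ℕ → List V
  | 0 => [f t]
  | n + 1 => f (t + n + 1) :: descL f t n

@[simp] theorem descL_ne (f : ℕ → V) (t n : ℕ) : descL f t n ≠ [] := by
  cases n <;> simp [descL]

@[simp] theorem descL_head? (f : ℕ → V) (t n : ℕ) : (descL f t n).head? = some (f (t + n)) := by
  cases n <;> simp [descL, Nat.add_assoc]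

theorem descL_getLast? (f : ℕ → V) (t n : ℕ) : (descL f t n).getLast? = some (f t) := by
  induction n with
  | zero => simp [descL]
  | succ n ih => rw [descL, getLast?_cons' (descL_ne f t n)]; exact ih

theorem descL_mem {f : ℕ → V} {t n : ℕ} {v : V} :
    v ∈ descL f t n ↔ ∃ i, i ≤ n ∧ v = f (t + i) := by
  induction n with
  | zero => simp [descL]
  | succ n ih =>
    rw [descL, List.mem_cons, ih]
    constructor
    · rintro (rfl | ⟨i, hi, rfl⟩)
      · exact ⟨n + 1, le_rfl, by congr 1⟩
      · exact ⟨i, by omega, rfl⟩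
    · rintro ⟨i, hi, rfl⟩
      rcases Nat.lt_or_ge i (n+1) with h | h
      · right; exact ⟨i, by omega, rfl⟩
      · left; congr 1; omega

theorem descL_nodup {f : ℕ → V} (hinj : Function.Injective f) (t n : ℕ) :
    (descL f t n).Nodup := by
  induction n with
  | zero => simp [descL]
  | succ n ih =>
    rw [descL, List.nodup_cons]
    refine ⟨fun h => ?_, ih⟩
    obtain ⟨i, hi, he⟩ := descL_mem.mp h
    have := hinj he
    omega

theorem descL_chain' {f : ℕ → V} {t n : ℕ}
    (h : ∀ i, t ≤ i → i < t + n → D (f (i + 1)) (f i)) : (descL f t n).Chain' D := by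
  induction n with
  | zero => exact List.isChain_singleton _
  | succ n ih =>
    unfold List.Chain'; rw [descL, List.isChain_cons]
    constructor
    · intro y hy
      rw [descL_head?] at hy
      cases hy
      exact h (t + n) (by omega) (by omega)
    · exact ih (fun i h1 h2 => h i (by omega) (by omega))


theorem tail_not_ray {f : ℕ → V} {P : Set (DiPath D)}
    (hmeet : ∀ p ∈ P, ∀ v ∈ p.vertSet, v ∈ Set.range f → v = p.first)
    {p : DiPath D} (hp : p ∈ P) : ∀ v ∈ p.verts.tail, v ∉ Set.range f := by
  intro v hv hvr
  have hv' : v ∈ p.verts := List.mem_of_mem_tail hv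
  have := hmeet p hp v hv' hvr
  have hhd : p.verts.head p.ne ∉ p.verts.tail := by
    have := p.nodup
    rw [← List.cons_head_tail p.ne, List.nodup_cons] at this
    exact this.1
  rw [this] at hv
  exact hhd hv

theorem last_eq_first_of_tail_nil {p : DiPath D} (h : p.verts.tail = []) :
    p.last = p.first := by
  have hv : p.verts = [p.first] := by
    conv_lhs => rw [← List.cons_head_tail p.ne, h]
    rfl
  have h1 : p.verts.getLast? = some p.last := List.getLast?_eq_getLast p.ne
  rw [hv] at h1
  simpa using h1.symm

theorem mem_linkEdges {P : Set (DiPath D)} {a b : V} :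
    (a, b) ∈ LinkEdges P ↔ ∃ p ∈ P, (a, b) ∈ p.verts.zip p.verts.tail := by
  simp [LinkEdges, DiPath.edgeSet]

theorem mem_linkVerts {P : Set (DiPath D)} {a : V} :
    a ∈ LinkVerts P ↔ ∃ p ∈ P, a ∈ p.verts := by
  simp [LinkVerts, DiPath.vertSet]

theorem linkage_ext {B0 : Set V} {f : ℕ → V} {P : Set (DiPath D)}
    (hlink : IsLinkage D B0 P)
    (hmeet : ∀ p ∈ P, ∀ v ∈ p.vertSet, v ∈ Set.range f → v = p.first)
    (L : DiPath D → List V)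
    (hne : ∀ p ∈ P, L p ≠ [])
    (hnd : ∀ p ∈ P, (L p).Nodup)
    (hch : ∀ p ∈ P, (L p).Chain' D)
    (hlast : ∀ p ∈ P, (L p).getLast? = some p.first)
    (hray : ∀ p ∈ P, ∀ v ∈ L p, v ∈ Set.range f)
    (hLd : ∀ p ∈ P, ∀ q ∈ P, p ≠ q → ∀ v ∈ L p, v ∉ L q) :
    ∃ Q, IsLinkage D B0 Q ∧
      Ini Q = {v | ∃ p ∈ P, (L p).head? = some v} ∪ (B0 \ CombVerts D f P) ∧
      Ter Q = Ter P ∪ (B0 \ CombVerts D f P) := by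
  classical
  -- tail of a path contains no ray vertex
  have htail : ∀ p ∈ P, ∀ v ∈ p.verts.tail, v ∉ Set.range f := by
    intro p hp v hv hvr
    have hv' : v ∈ p.verts := List.mem_of_mem_tail hv
    have := hmeet p hp v hv' hvr
    have hhd : p.verts.head p.ne ∉ p.verts.tail := by
      have := p.nodup
      rw [← List.cons_head_tail p.ne, List.nodup_cons] at this
      exact this.1
    rw [this] at hv
    exact hhd hv
  have hfmem : ∀ p ∈ P, p.first ∈ L p := by
    intro p hp
    have := hlast p hp
    exact List.mem_of_mem_getLast? (by rw [this]; rfl)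
  -- the extension of p by L p
  set Q : Set (DiPath D) :=
    {q | (∃ p ∈ P, q.verts = L p ++ p.verts.tail) ∨ (∃ b ∈ B0 \ CombVerts D f P, q.verts = [b])}
    with hQdef
  -- basic computations for extended members
  have hfirstq : ∀ (q : DiPath D), ∀ p ∈ P, q.verts = L p ++ p.verts.tail →
      (L p).head? = some q.first := by
    intro q p hp hq
    have h1 : q.verts.head? = some q.first := List.head?_eq_head q.ne
    rw [hq] at h1
    rwa [List.head?_append_of_ne_nil _ (hne p hp)] at h1
  have hlastq : ∀ (q : DiPath D), ∀ p ∈ P, q.verts = L p ++ p.verts.tail →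
      q.last = p.last := by
    intro q p hp hq
    have h1 : q.verts.getLast? = some q.last := List.getLast?_eq_getLast q.ne
    rcases h : p.verts.tail with _ | ⟨y, ys⟩
    · rw [hq, h, List.append_nil] at h1
      rw [hlast p hp] at h1
      -- q.last = p.first, and p is a single vertex so p.first = p.last
      have hsin : p.verts = [p.first] := by
        conv_lhs => rw [← List.cons_head_tail p.ne]
        rw [h]; rfl
      have : p.last = p.first := by
        simp only [DiPath.last, hsin]
        rfl
      rw [this]
      exact (Option.some_injective _ h1).symm
    · rw [hq, h, List.getLast?_append_of_ne_nil _ (by simp)] at h1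
      have h2 : p.verts.getLast? = some p.last := List.getLast?_eq_getLast p.ne
      conv_lhs at h2 => rw [← List.cons_head_tail p.ne]
      rw [h] at h2
      rw [List.getLast?_cons_cons] at h2
      rw [h2] at h1
      exact (Option.some_injective _ h1).symm
  have hvq : ∀ (q : DiPath D), ∀ p ∈ P, q.verts = L p ++ p.verts.tail →
      q.vertSet = {v | v ∈ L p} ∪ p.vertSet := by
    intro q p hp hq
    ext v
    simp only [DiPath.vertSet, Set.mem_union, Set.mem_setOf_eq, hq, List.mem_append]
    constructor
    · rintro (h | h)
      · exact Or.inl h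
      · exact Or.inr (List.mem_of_mem_tail h)
    · rintro (h | h)
      · exact Or.inl h
      · rcases (List.mem_cons.mp (by rw [List.cons_head_tail p.ne]; exact h :
          v ∈ p.verts.head p.ne :: p.verts.tail)) with h' | h'
        · left; rw [h']; exact hfmem p hp
        · right; exact h'
  -- existence of extended members
  have hex : ∀ p ∈ P, ∃ q : DiPath D, q ∈ Q ∧ q.verts = L p ++ p.verts.tail := by
    intro p hp
    refine ⟨⟨L p ++ p.verts.tail, by simp [hne p hp], ?_, ?_⟩, Or.inl ⟨p, hp, rfl⟩, rfl⟩
    · refine List.Nodup.append (hnd p hp) (nodup_tail p.nodup) ?_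
      intro a ha ha'
      exact htail p hp a ha' (hray p hp a ha)
    · unfold List.Chain'; rw [List.isChain_append]
      refine ⟨hch p hp, p.chain.tail, ?_⟩
      intro x hx y hy
      rw [hlast p hp] at hx
      cases hx
      have hc := p.chain
      rw [← List.cons_head_tail p.ne] at hc; unfold List.Chain' at hc; rw [List.isChain_cons] at hc
      exact hc.1 y hy
  have htrivex : ∀ b ∈ B0 \ CombVerts D f P, ∃ q : DiPath D, q ∈ Q ∧ q.verts = [b] := by
    intro b hb
    exact ⟨⟨[b], by simp, by simp, List.isChain_singleton b⟩, Or.inr ⟨b, hb, rfl⟩, rfl⟩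
  have hPC : ∀ p ∈ P, p.vertSet ⊆ CombVerts D f P := by
    intro p hp v hv
    exact Or.inr (Set.mem_biUnion hp hv)
  refine ⟨Q, ⟨?_, ?_⟩, ?_, ?_⟩
  · -- all lasts in B0
    rintro q (⟨p, hp, hq⟩ | ⟨b, hb, hq⟩)
    · rw [hlastq q p hp hq]
      exact hlink.1 p hp
    · have : q.last = b := by simp [DiPath.last, hq]
      rw [this]; exact hb.1
  · -- pairwise disjoint
    rintro q1 (⟨p1, hp1, hq1⟩ | ⟨b1, hb1, hq1⟩) q2 (⟨p2, hp2, hq2⟩ | ⟨b2, hb2, hq2⟩) hne12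
    · by_cases hpp : p1 = p2
      · exact absurd (dipath_eq (by rw [hq1, hq2, hpp])) hne12
      rw [hvq q1 p1 hp1 hq1, hvq q2 p2 hp2 hq2]
      have hL12 : ∀ v ∈ L p1, v ∉ L p2 := hLd p1 hp1 p2 hp2 hpp
      rw [Set.disjoint_union_left]
      constructor <;> rw [Set.disjoint_union_right] <;> constructor
      · exact Set.disjoint_left.mpr (fun a ha => hL12 a ha)
      · -- L p1 vs p2.vertSet
        refine Set.disjoint_left.mpr (fun a ha ha' => ?_)
        have har : a ∈ Set.range f := hray p1 hp1 a ha
        have : a = p2.first := hmeet p2 hp2 a ha' har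
        exact hL12 a ha (this ▸ hfmem p2 hp2)
      · -- p1.vertSet vs L p2
        refine Set.disjoint_left.mpr (fun a ha ha' => ?_)
        have har : a ∈ Set.range f := hray p2 hp2 a ha'
        have : a = p1.first := hmeet p1 hp1 a ha har
        exact hL12 a (this ▸ hfmem p1 hp1) ha'
      · exact hlink.2 p1 hp1 p2 hp2 hpp
    · rw [hvq q1 p1 hp1 hq1]
      refine Set.disjoint_left.mpr (fun a ha ha' => ?_)
      have ha2 : a = b2 := by simpa [DiPath.vertSet, hq2] using ha'
      subst ha2
      rcases ha with h | h
      · exact hb2.2 (Or.inl (hray p1 hp1 a h))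
      · exact hb2.2 (hPC p1 hp1 h)
    · rw [hvq q2 p2 hp2 hq2]
      refine Set.disjoint_right.mpr (fun a ha ha' => ?_)
      have ha2 : a = b1 := by simpa [DiPath.vertSet, hq1] using ha'
      subst ha2
      rcases ha with h | h
      · exact hb1.2 (Or.inl (hray p2 hp2 a h))
      · exact hb1.2 (hPC p2 hp2 h)
    · by_cases hbb : b1 = b2
      · exact absurd (dipath_eq (by rw [hq1, hq2, hbb])) hne12
      refine Set.disjoint_left.mpr (fun a ha ha' => ?_)
      have h1 : a = b1 := by simpa [DiPath.vertSet, hq1] using ha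
      have h2 : a = b2 := by simpa [DiPath.vertSet, hq2] using ha'
      exact hbb (h1 ▸ h2)
  · -- Ini Q
    ext v
    simp only [Ini, Set.mem_setOf_eq, Set.mem_union]
    constructor
    · rintro ⟨q, (⟨p, hp, hq⟩ | ⟨b, hb, hq⟩), rfl⟩
      · exact Or.inl ⟨p, hp, hfirstq q p hp hq⟩
      · right
        have : q.first = b := by simp [DiPath.first, hq]
        rw [this]; exact hb
    · rintro (⟨p, hp, hv⟩ | hv)
      · obtain ⟨q, hqQ, hq⟩ := hex p hp
        refine ⟨q, hqQ, ?_⟩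
        have := hfirstq q p hp hq
        rw [this] at hv
        exact (Option.some_injective _ hv).symm ▸ rfl
      · obtain ⟨q, hqQ, hq⟩ := htrivex v hv
        exact ⟨q, hqQ, by simp [DiPath.first, hq]⟩
  · -- Ter Q
    ext v
    simp only [Ter, Set.mem_setOf_eq, Set.mem_union]
    constructor
    · rintro ⟨q, (⟨p, hp, hq⟩ | ⟨b, hb, hq⟩), rfl⟩
      · exact Or.inl ⟨p, hp, (hlastq q p hp hq).symm⟩
      · right
        have : q.last = b := by simp [DiPath.last, hq]
        rw [this]; exact hb
    · rintro (⟨p, hp, hv⟩ | hv)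
      · obtain ⟨q, hqQ, hq⟩ := hex p hp
        exact ⟨q, hqQ, by rw [hlastq q p hp hq]; exact hv⟩
      · obtain ⟨q, hqQ, hq⟩ := htrivex v hv
        exact ⟨q, hqQ, by simp [DiPath.last, hq]⟩

end CombAux

/-- If a dimaze contains an alternating comb, then the vertices of out-degree 2 on
the comb together with the exits off the comb form a set that is linkable onto the
exits but is not maximally linkable. -/
theorem comb_gives_nonmaximal_onto (D : V → V → Prop) (B0 : Set V)
    (hD : IsDimaze D B0) (f : ℕ → V) (o : ℕ → Bool) (P : Set (DiPath D))
    (hinj : Function.Injective f)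
    (hedge : ∀ n, if o n then D (f n) (f (n+1)) else D (f (n+1)) (f n))
    (halt : ∀ N, ∃ k ≥ N, o k = true ∧ o (k+1) = false)
    (hlink : IsLinkage D B0 P)
    (hini : Ini P = insert (f 0) {v | ∃ k, o k = true ∧ o (k+1) = false ∧ v = f (k+1)})
    (hmeet : ∀ p ∈ P, ∀ v ∈ p.vertSet, v ∈ Set.range f → v = p.first) :
    LinkableOnto D B0
      ({v | v ∈ CombVerts D f P ∧ {w | CombAdj D f o P v w}.encard = 2} ∪
        (B0 \ CombVerts D f P)) ∧
    ¬ MaximalIn (Linkable D B0)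
      ({v | v ∈ CombVerts D f P ∧ {w | CombAdj D f o P v w}.encard = 2} ∪
        (B0 \ CombVerts D f P)) := by
  classical
  open CombAux in
  have hedgeT : ∀ nn, o nn = true → D (f nn) (f (nn+1)) := by
    intro nn h; have := hedge nn; rw [h] at this; simpa using this
  have hedgeF : ∀ nn, o nn = false → D (f (nn+1)) (f nn) := by
    intro nn h; have := hedge nn; rw [h] at this; simpa using this
  have hPC : ∀ p ∈ P, p.vertSet ⊆ CombVerts D f P := by
    intro p hp v hv; exact Or.inr (Set.mem_biUnion hp hv)
  have hrC : ∀ nn, f nn ∈ CombVerts D f P := fun nn => Or.inl ⟨nn, rfl⟩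
  have huniq : ∀ p ∈ P, ∀ q ∈ P, ∀ v, v ∈ p.verts → v ∈ q.verts → p = q := by
    intro p hp q hq v h1 h2
    by_contra h
    exact Set.disjoint_left.mp (hlink.2 p hp q hq h) h1 h2
  -- the index of the first vertex of each path
  have hPt : ∀ p ∈ P, ∃ tt, p.first = f tt ∧
      (tt = 0 ∨ (1 ≤ tt ∧ o (tt-1) = true ∧ o tt = false)) := by
    intro p hp
    have hmem : p.first ∈ Ini P := ⟨p, hp, rfl⟩
    rw [hini, Set.mem_insert_iff] at hmem
    rcases hmem with h | h
    · exact ⟨0, h, Or.inl rfl⟩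
    · obtain ⟨k, hk1, hk2, hk3⟩ := h
      exact ⟨k+1, hk3, Or.inr ⟨by omega, by simpa using hk1, hk2⟩⟩
  choose! t ht1 ht2 using hPt
  have hIP : ∀ tt : ℕ, (tt = 0 ∨ (1 ≤ tt ∧ o (tt-1) = true ∧ o tt = false)) →
      ∃ p ∈ P, p.first = f tt := by
    intro tt h
    have hmem : f tt ∈ Ini P := by
      rw [hini, Set.mem_insert_iff]
      rcases h with rfl | ⟨h1, h2, h3⟩
      · exact Or.inl rfl
      · refine Or.inr ⟨tt - 1, h2, ?_, ?_⟩
        · rwa [Nat.sub_add_cancel h1]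
        · rw [Nat.sub_add_cancel h1]
    exact hmem
  have htP : ∀ p ∈ P, ∀ q ∈ P, t p = t q → p = q := by
    intro p hp q hq h
    have hfe : p.first = q.first := by rw [ht1 p hp, ht1 q hq, h]
    exact huniq p hp q hq p.first (CombAux.first_mem p) (hfe ▸ CombAux.first_mem q)
  have htpinj : ∀ p ∈ P, ∀ q ∈ P, p ≠ q → t p ≠ t q := by
    intro p hp q hq hne he; exact hne (htP p hp q hq he)
  set Spk : Set V :=
    {v | (o 0 = true ∧ v = f 0) ∨ ∃ m, o m = false ∧ o (m+1) = true ∧ v = f (m+1)} with hSpk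
  -- ==================== classification of out-degree-2 vertices ====================
  have hclass : {v | v ∈ CombVerts D f P ∧ {w | CombAdj D f o P v w}.encard = 2} = Spk := by
    ext v
    simp only [Set.mem_setOf_eq, hSpk]
    constructor
    · rintro ⟨hvC, hv2⟩
      by_contra hvS
      -- mixed ray/link out-edges are impossible for non-spikes
      have hmix : ∀ w1 w2 : V,
          (∃ nn, (o nn = true ∧ v = f nn ∧ w1 = f (nn+1)) ∨
            (o nn = false ∧ v = f (nn+1) ∧ w1 = f nn)) →
          (v, w2) ∈ LinkEdges P → False := by
        rintro w1 w2 ⟨nn, hc⟩ hl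
        rw [CombAux.mem_linkEdges] at hl
        obtain ⟨p, hp, hz⟩ := hl
        have hvp : v ∈ p.verts := (List.of_mem_zip hz).1
        have hvr : v ∈ Set.range f := by
          rcases hc with ⟨-, hb, -⟩ | ⟨-, hb, -⟩
          · exact ⟨nn, hb.symm⟩
          · exact ⟨nn+1, hb.symm⟩
        have hvf : v = f (t p) := by
          have := hmeet p hp v hvp hvr
          rwa [ht1 p hp] at this
        rcases ht2 p hp with h0 | ⟨h1, h2, h3⟩
        · rw [h0] at hvf
          rcases hc with ⟨ha, hb, -⟩ | ⟨ha, hb, -⟩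
          · have hnn : nn = 0 := hinj (by rw [← hb, hvf])
            exact hvS (Or.inl ⟨hnn ▸ ha, hvf⟩)
          · have : nn + 1 = 0 := hinj (by rw [← hb, hvf])
            omega
        · rcases hc with ⟨ha, hb, -⟩ | ⟨ha, hb, -⟩
          · have hnn : nn = t p := hinj (by rw [← hb, hvf])
            rw [hnn, h3] at ha; exact absurd ha (by simp)
          · have hnn : nn + 1 = t p := hinj (by rw [← hb, hvf])
            have : nn = t p - 1 := by omega
            rw [this, h2] at ha; exact absurd ha (by simp)
      have hss : {w | CombAdj D f o P v w}.encard ≤ 1 := by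
        rw [Set.encard_le_one_iff]
        intro w1 w2 h1 h2
        simp only [Set.mem_setOf_eq, CombAdj] at h1 h2
        rcases h1 with ⟨n1, c1⟩ | hl1
        · rcases h2 with ⟨n2, c2⟩ | hl2
          · rcases c1 with ⟨a1, b1, e1⟩ | ⟨a1, b1, e1⟩ <;>
              rcases c2 with ⟨a2, b2, e2⟩ | ⟨a2, b2, e2⟩
            · have : n1 = n2 := hinj (by rw [← b1, ← b2])
              rw [e1, e2, this]
            · -- v = f n1 with o n1 true, v = f (n2+1) with o n2 false : spike!
              exfalso
              have hn12 : n1 = n2 + 1 := hinj (by rw [← b1, ← b2])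
              exact hvS (Or.inr ⟨n2, a2, hn12 ▸ a1, hn12 ▸ b1⟩)
            · exfalso
              have hn12 : n2 = n1 + 1 := hinj (by rw [← b2, ← b1])
              exact hvS (Or.inr ⟨n1, a1, hn12 ▸ a2, hn12 ▸ b2⟩)
            · have : n1 = n2 := by have := hinj (b1 ▸ b2 ▸ rfl : f (n1+1) = f (n2+1)); omega
              rw [e1, e2, this]
          · exact (hmix w1 w2 ⟨n1, c1⟩ hl2).elim
        · rcases h2 with ⟨n2, c2⟩ | hl2
          · exact (hmix w2 w1 ⟨n2, c2⟩ hl1).elim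
          · rw [CombAux.mem_linkEdges] at hl1 hl2
            obtain ⟨p1, hp1, hz1⟩ := hl1
            obtain ⟨p2, hp2, hz2⟩ := hl2
            have hpp : p1 = p2 :=
              huniq p1 hp1 p2 hp2 v (List.of_mem_zip hz1).1 (List.of_mem_zip hz2).1
            subst hpp
            exact CombAux.zip_succ_unique p1.nodup hz1 hz2
      rw [hv2] at hss
      norm_num at hss
    · intro hv
      rcases hv with ⟨ho0, rfl⟩ | ⟨m, hm1, hm2, rfl⟩
      · -- v = f 0 with o 0 = true
        refine ⟨hrC 0, ?_⟩
        obtain ⟨p, hp, hf⟩ := hIP 0 (Or.inl rfl)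
        have hnt : p.verts.tail ≠ [] := by
          intro h
          have h1 : p.last = p.first := CombAux.last_eq_first_of_tail_nil h
          have h2 : p.last ∈ B0 := hlink.1 p hp
          rw [h1, hf] at h2
          exact hD (f 0) h2 (f 1) (hedgeT 0 ho0)
        obtain ⟨w, ws, hws⟩ : ∃ w ws, p.verts.tail = w :: ws := by
          rcases h : p.verts.tail with _ | ⟨w, ws⟩
          · exact absurd h hnt
          · exact ⟨w, ws, rfl⟩
        have hvp : p.verts = f 0 :: w :: ws := by
          conv_lhs => rw [← List.cons_head_tail p.ne, hws]
          rw [show p.verts.head p.ne = f 0 from hf ▸ rfl]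
        have hset : {w' | CombAdj D f o P (f 0) w'} = {f 1, w} := by
          ext w'
          simp only [Set.mem_setOf_eq, Set.mem_insert_iff, Set.mem_singleton_iff, CombAdj]
          constructor
          · rintro (⟨nn, ⟨ha, hb, rfl⟩ | ⟨ha, hb, rfl⟩⟩ | hl)
            · have : nn = 0 := hinj hb.symm
              rw [this]; left; rfl
            · have : nn + 1 = 0 := hinj hb.symm
              omega
            · right
              rw [CombAux.mem_linkEdges] at hl
              obtain ⟨q, hq, hz⟩ := hl
              have hqp : q = p := huniq q hq p hp (f 0) (List.of_mem_zip hz).1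
                (by rw [hvp]; exact List.mem_cons_self)
              subst hqp
              exact CombAux.zip_succ_unique q.nodup hz
                (by rw [hvp]; exact CombAux.head_zip_mem)
          · rintro (rfl | rfl)
            · exact Or.inl ⟨0, Or.inl ⟨ho0, rfl, rfl⟩⟩
            · refine Or.inr ?_
              rw [CombAux.mem_linkEdges]
              exact ⟨p, hp, by rw [hvp]; exact CombAux.head_zip_mem⟩
        rw [hset]
        refine Set.encard_pair (fun h => ?_)
        exact CombAux.tail_not_ray hmeet hp w (hws ▸ List.mem_cons_self (a := w) (l := ws)) ⟨1, h⟩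
      · -- v = f (m+1), spike
        refine ⟨hrC (m+1), ?_⟩
        have hset : {w' | CombAdj D f o P (f (m+1)) w'} = {f (m+2), f m} := by
          ext w'
          simp only [Set.mem_setOf_eq, Set.mem_insert_iff, Set.mem_singleton_iff, CombAdj]
          constructor
          · rintro (⟨nn, ⟨ha, hb, rfl⟩ | ⟨ha, hb, rfl⟩⟩ | hl)
            · have : nn = m + 1 := hinj hb.symm
              rw [this]; left; rfl
            · have : nn = m := by have := hinj hb.symm; omega
              rw [this]; right; rfl
            · exfalso
              rw [CombAux.mem_linkEdges] at hl
              obtain ⟨q, hq, hz⟩ := hl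
              have hvq : f (m+1) = f (t q) := by
                have := hmeet q hq (f (m+1)) (List.of_mem_zip hz).1 ⟨m+1, rfl⟩
                rwa [ht1 q hq] at this
              have htq : t q = m + 1 := (hinj hvq).symm
              rcases ht2 q hq with h0 | ⟨h1, h2, h3⟩
              · omega
              · rw [htq] at h3
                rw [h3] at hm2; exact absurd hm2 (by simp)
          · rintro (rfl | rfl)
            · exact Or.inl ⟨m+1, Or.inl ⟨hm2, rfl, rfl⟩⟩
            · exact Or.inl ⟨m, Or.inr ⟨hm1, rfl, rfl⟩⟩
        rw [hset]
        exact Set.encard_pair (fun h => by have := hinj h; omega)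
  -- ==================== terminal vertices of P ====================
  have hTer : Ter P = B0 ∩ CombVerts D f P := by
    ext v
    constructor
    · rintro ⟨p, hp, rfl⟩
      exact ⟨hlink.1 p hp, hPC p hp (CombAux.last_mem p)⟩
    · rintro ⟨hvB, hvC⟩
      have hlastof : ∀ p ∈ P, v ∈ p.verts → v = p.last := by
        intro p hp hv
        by_contra h
        obtain ⟨w, hw⟩ := CombAux.exists_succ_of_ne_getLast p.ne hv h
        exact hD v hvB w (CombAux.zip_rel p.chain hw)
      rcases hvC with hr | hLV
      · obtain ⟨nn, rfl⟩ := hr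
        have hq : nn = 0 ∨ (1 ≤ nn ∧ o (nn-1) = true ∧ o nn = false) := by
          rcases nn with _ | m
          · exact Or.inl rfl
          · refine Or.inr ⟨by omega, ?_, ?_⟩
            · rcases hm : o m with _ | _
              · exact absurd (hedgeF m hm) (fun h => hD _ hvB _ h)
              · simpa using hm
            · rcases hm : o (m+1) with _ | _
              · rfl
              · exact absurd (hedgeT (m+1) hm) (fun h => hD _ hvB _ h)
        obtain ⟨p, hp, hf⟩ := hIP nn hq
        exact ⟨p, hp, (hlastof p hp (hf ▸ CombAux.first_mem p)).symm⟩
      · rw [CombAux.mem_linkVerts] at hLV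
        obtain ⟨p, hp, hv⟩ := hLV
        exact ⟨p, hp, (hlastof p hp hv).symm⟩
  -- ==================== part 1 : the linkage onto B0 ====================
  have hex1 : ∀ p ∈ P, ∃ nn, (∀ i, t p ≤ i → i < t p + nn → o i = false) ∧
      o (t p + nn) = true := by
    intro p hp
    have hex : ∃ s, t p ≤ s ∧ o s = true := by
      obtain ⟨k, hk, hk1, -⟩ := halt (t p); exact ⟨k, hk, hk1⟩
    have hs := Nat.find_spec hex
    refine ⟨Nat.find hex - t p, ?_, ?_⟩
    · intro i h1 h2
      have hlt : i < Nat.find hex := by omega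
      have := Nat.find_min hex hlt
      rcases hv : o i with _ | _
      · rfl
      · exact absurd (And.intro h1 hv) this
    · have h : t p + (Nat.find hex - t p) = Nat.find hex := by omega
      rw [h]; exact hs.2
  choose! n hn1 hn2 using hex1
  have hnu : ∀ p ∈ P, ∀ m, (∀ i, t p ≤ i → i < t p + m → o i = false) →
      o (t p + m) = true → m = n p := by
    intro p hp m h1 h2
    by_contra h
    rcases Nat.lt_or_ge m (n p) with hlt | hge
    · have := hn1 p hp (t p + m) (by omega) (by omega)
      rw [h2] at this; exact absurd this (by simp)
    · have hlt : n p < m := by omega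
      have := h1 (t p + n p) (by omega) (by omega)
      rw [hn2 p hp] at this; exact absurd this (by simp)
  have hd1 : ∀ p ∈ P, ∀ q ∈ P, t p < t q →
      ∀ v, v ∈ CombAux.descL f (t p) (n p) → v ∈ CombAux.descL f (t q) (n q) → False := by
    intro p hp q hq hlt v h1 h2
    obtain ⟨i, hi, rfl⟩ := CombAux.descL_mem.mp h1
    obtain ⟨j, hj, he⟩ := CombAux.descL_mem.mp h2
    have hij : t p + i = t q + j := hinj he
    have h3 : t p + n p < t q := by
      by_contra hcon
      push_neg at hcon
      rcases ht2 q hq with h0 | ⟨h4, h5, h6⟩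
      · omega
      · have := hn1 p hp (t q - 1) (by omega) (by omega)
        rw [this] at h5; exact absurd h5 (by simp)
    omega
  obtain ⟨Q1, hQ1link, hQ1ini, hQ1ter⟩ :=
    CombAux.linkage_ext hlink hmeet (fun p => CombAux.descL f (t p) (n p))
      (fun p _ => CombAux.descL_ne f (t p) (n p))
      (fun p _ => CombAux.descL_nodup hinj (t p) (n p))
      (fun p hp => CombAux.descL_chain' (fun i hi1 hi2 => hedgeF i (hn1 p hp i hi1 hi2)))
      (fun p hp => by rw [CombAux.descL_getLast?, ht1 p hp])
      (fun p _ v hv => by obtain ⟨i, -, rfl⟩ := CombAux.descL_mem.mp hv; exact ⟨t p + i, rfl⟩)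
      (by
        intro p hp q hq hne v hv hv'
        rcases lt_trichotomy (t p) (t q) with h | h | h
        · exact hd1 p hp q hq h v hv hv'
        · exact htpinj p hp q hq hne h
        · exact hd1 q hq p hp h v hv' hv)
  have hheads1 : {v | ∃ p ∈ P, (CombAux.descL f (t p) (n p)).head? = some v} = Spk := by
    ext v
    simp only [Set.mem_setOf_eq, CombAux.descL_head?, Option.some.injEq, hSpk]
    constructor
    · rintro ⟨p, hp, hv⟩
      rcases Nat.eq_zero_or_pos (n p) with h0 | h0
      · have hot : o (t p) = true := by
          have := hn2 p hp; rwa [h0, Nat.add_zero] at this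
        rcases ht2 p hp with h1 | ⟨h1, h2, h3⟩
        · left
          constructor
          · rwa [h1] at hot
          · rw [← hv, h0, h1]
        · rw [h3] at hot; exact absurd hot (by simp)
      · right
        refine ⟨t p + n p - 1, hn1 p hp _ (by omega) (by omega), ?_, ?_⟩
        · have := hn2 p hp
          have he : t p + n p - 1 + 1 = t p + n p := by omega
          rwa [he]
        · rw [← hv]; congr 1; omega
    · rintro (⟨ho0, rfl⟩ | ⟨m, hm1, hm2, rfl⟩)
      · obtain ⟨p, hp, hf⟩ := hIP 0 (Or.inl rfl)
        have ht0 : t p = 0 := hinj (by rw [← ht1 p hp, hf])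
        have hn0 : n p = 0 := by
          by_contra h
          have := hn1 p hp 0 (by omega) (by omega)
          rw [ho0] at this; exact absurd this (by simp)
        exact ⟨p, hp, by rw [ht0, hn0]⟩
      · have hexf : ∃ tt, ∀ i, tt ≤ i → i ≤ m → o i = false :=
          ⟨m+1, fun i h1 h2 => absurd (h1.trans h2) (by omega)⟩
        have hspec : ∀ i, Nat.find hexf ≤ i → i ≤ m → o i = false := Nat.find_spec hexf
        have htfle : Nat.find hexf ≤ m := Nat.find_le (fun i h1 h2 => by
          have : i = m := by omega
          rw [this]; exact hm1)
        have hqual : Nat.find hexf = 0 ∨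
            (1 ≤ Nat.find hexf ∧ o (Nat.find hexf - 1) = true ∧ o (Nat.find hexf) = false) := by
          rcases Nat.eq_zero_or_pos (Nat.find hexf) with h | h
          · exact Or.inl h
          · right
            refine ⟨h, ?_, hspec _ le_rfl htfle⟩
            have hmin := Nat.find_min hexf (show Nat.find hexf - 1 < Nat.find hexf by omega)
            push_neg at hmin
            obtain ⟨i, h1, h2, h3⟩ := hmin
            have hieq : i = Nat.find hexf - 1 := by
              by_contra hii
              exact h3 (hspec i (by omega) h2)
            rw [← hieq]
            rcases hoi : o i with _ | _
            · exact absurd hoi h3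
            · rfl
        obtain ⟨p, hp, hf⟩ := hIP (Nat.find hexf) hqual
        have htp : t p = Nat.find hexf := hinj (by rw [← ht1 p hp, hf])
        have hnp : n p = m + 1 - Nat.find hexf := by
          refine (hnu p hp (m + 1 - Nat.find hexf) ?_ ?_).symm
          · intro i hi1 hi2
            exact hspec i (by omega) (by omega)
          · have he : t p + (m + 1 - Nat.find hexf) = m + 1 := by omega
            rw [he]; exact hm2
        exact ⟨p, hp, by rw [htp, hnp]; congr 1; omega⟩
  refine ⟨⟨Q1, hQ1link, ?_, ?_⟩, ?_⟩
  · rw [hQ1ini, hheads1, hclass]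
  · rw [hQ1ter, hTer, Set.inter_union_diff]
  -- ==================== part 2 : non-maximality ====================
  intro hM
  obtain ⟨-, hmax⟩ := hM
  -- ascending segments
  have hex2 : ∀ p ∈ P, ∃ ee, ee ≤ t p ∧ (∀ i, ee ≤ i → i < t p → o i = true) ∧
      ((t p = 0 ∧ ee = 0) ∨ (1 ≤ t p ∧ 1 ≤ ee ∧ (ee = 1 ∨ o (ee-1) = false))) := by
    intro p hp
    rcases Nat.eq_zero_or_pos (t p) with h0 | h0
    · exact ⟨0, by omega, fun i h1 h2 => absurd h2 (by omega), Or.inl ⟨h0, rfl⟩⟩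
    · have hexr : ∃ s, ∀ i, s ≤ i → i < t p → o i = true :=
        ⟨t p, fun i h1 h2 => absurd (h1.trans_lt h2) (lt_irrefl _)⟩
      have hrs := Nat.find_spec hexr
      have hrle : Nat.find hexr ≤ t p :=
        Nat.find_le (fun i h1 h2 => absurd (h1.trans_lt h2) (lt_irrefl _))
      refine ⟨max 1 (Nat.find hexr), by omega, fun i h1 h2 => hrs i (by omega) h2,
        Or.inr ⟨h0, by omega, ?_⟩⟩
      rcases Nat.lt_or_ge (Nat.find hexr) 2 with h | h
      · left; omega
      · right
        have hmax1 : max 1 (Nat.find hexr) = Nat.find hexr := by omega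
        rw [hmax1]
        have hmin := Nat.find_min hexr (show Nat.find hexr - 1 < Nat.find hexr by omega)
        push_neg at hmin
        obtain ⟨i, h1, h2, h3⟩ := hmin
        have hieq : i = Nat.find hexr - 1 := by
          by_contra hii
          exact h3 (hrs i (by omega) h2)
        rw [← hieq]
        rcases hoi : o i with _ | _
        · rfl
        · exact absurd hoi h3
  choose! e he1 he2 he3 using hex2
  have hd2 : ∀ p ∈ P, ∀ q ∈ P, t p < t q →
      ∀ v, v ∈ CombAux.ascL f (e p) (t p - e p) →
        v ∈ CombAux.ascL f (e q) (t q - e q) → False := by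
    intro p hp q hq hlt v h1 h2
    obtain ⟨i, hi, rfl⟩ := CombAux.ascL_mem.mp h1
    obtain ⟨j, hj, he'⟩ := CombAux.ascL_mem.mp h2
    have hij : e p + i = e q + j := hinj he'
    have h3 : t p < e q := by
      by_contra hcon
      push_neg at hcon
      rcases he3 q hq with ⟨h0, -⟩ | ⟨h0, h4, -⟩
      · omega
      · have hot : o (t p) = true := he2 q hq (t p) hcon hlt
        rcases ht2 p hp with h5 | ⟨h5, h6, h7⟩
        · omega
        · rw [h7] at hot; exact absurd hot (by simp)
    have := he1 p hp
    omega
  obtain ⟨Q2, hQ2link, hQ2ini, hQ2ter⟩ :=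
    CombAux.linkage_ext hlink hmeet (fun p => CombAux.ascL f (e p) (t p - e p))
      (fun p _ => CombAux.ascL_ne f _ _)
      (fun p _ => CombAux.ascL_nodup hinj _ _)
      (fun p hp => CombAux.ascL_chain' (fun i hi1 hi2 =>
        hedgeT i (he2 p hp i hi1 (by have := he1 p hp; omega))))
      (fun p hp => by
        rw [CombAux.ascL_getLast?, ht1 p hp]
        have := he1 p hp
        congr 2
        omega)
      (fun p _ v hv => by obtain ⟨i, -, rfl⟩ := CombAux.ascL_mem.mp hv; exact ⟨e p + i, rfl⟩)
      (by
        intro p hp q hq hne v hv hv'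
        rcases lt_trichotomy (t p) (t q) with h | h | h
        · exact hd2 p hp q hq h v hv hv'
        · exact htpinj p hp q hq hne h
        · exact hd2 q hq p hp h v hv' hv)
  -- every spike is the head of some ascending segment
  have hheads2 : ∀ v ∈ Spk, ∃ p ∈ P, f (e p) = v := by
    intro v hv
    rw [hSpk, Set.mem_setOf_eq] at hv
    rcases hv with ⟨ho0, rfl⟩ | ⟨m, hm1, hm2, rfl⟩
    · obtain ⟨p, hp, hf⟩ := hIP 0 (Or.inl rfl)
      have ht0 : t p = 0 := hinj (by rw [← ht1 p hp, hf])
      have he0 : e p = 0 := by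
        rcases he3 p hp with ⟨-, h⟩ | ⟨h, -⟩
        · exact h
        · omega
      exact ⟨p, hp, by rw [he0]⟩
    · have hexk : ∃ k, m+1 ≤ k ∧ o (k+1) = false := by
        obtain ⟨k, hk, -, hk2⟩ := halt (m+1); exact ⟨k, hk, hk2⟩
      have hk0 := Nat.find_spec hexk
      have htrue : ∀ i, m+1 ≤ i → i ≤ Nat.find hexk → o i = true := by
        intro i h1 h2
        rcases Nat.eq_or_lt_of_le h1 with h | h
        · rw [← h]; exact hm2
        · have hmin := Nat.find_min hexk (show i - 1 < Nat.find hexk by omega)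
          push_neg at hmin
          have hne := hmin (by omega)
          have heq : i - 1 + 1 = i := by omega
          rw [heq] at hne
          rcases hoi : o i with _ | _
          · exact absurd hoi hne
          · rfl
      have hqual : Nat.find hexk + 1 = 0 ∨ (1 ≤ Nat.find hexk + 1 ∧
          o (Nat.find hexk + 1 - 1) = true ∧ o (Nat.find hexk + 1) = false) :=
        Or.inr ⟨by omega, by simpa using htrue (Nat.find hexk) hk0.1 le_rfl, hk0.2⟩
      obtain ⟨p, hp, hf⟩ := hIP (Nat.find hexk + 1) hqual
      have htp : t p = Nat.find hexk + 1 := hinj (by rw [← ht1 p hp, hf])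
      have hep : e p = m + 1 := by
        have hge : m + 1 ≤ e p := by
          by_contra h
          have := he2 p hp m (by omega) (by omega)
          rw [hm1] at this; exact absurd this (by simp)
        have hle : e p ≤ m + 1 := by
          by_contra h
          rcases he3 p hp with ⟨h0, -⟩ | ⟨-, h1, h2 | h2⟩
          · omega
          · omega
          · have hepl := he1 p hp
            have hot : o (e p - 1) = true := htrue (e p - 1) (by omega) (by omega)
            rw [h2] at hot; exact absurd hot (by simp)
        omega
      exact ⟨p, hp, by rw [hep]⟩
  have hSsub : ({v | v ∈ CombVerts D f P ∧ {w | CombAdj D f o P v w}.encard = 2} ∪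
      (B0 \ CombVerts D f P)) ⊆ Ini Q2 := by
    rw [hQ2ini, hclass]
    apply Set.union_subset_union_left
    intro v hv
    obtain ⟨p, hp, hf⟩ := hheads2 v hv
    exact ⟨p, hp, by rw [CombAux.ascL_head?, hf]⟩
  have hIQ2 := hmax (Ini Q2) ⟨Q2, hQ2link, rfl⟩ hSsub
  by_cases ho0 : o 0 = true
  · -- the extra vertex is f 1
    have hexk : ∃ k, 0 ≤ k ∧ o (k+1) = false := by
      obtain ⟨k, hk, -, hk2⟩ := halt 0; exact ⟨k, hk, hk2⟩
    have hk0 := Nat.find_spec hexk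
    have htrue : ∀ i, i ≤ Nat.find hexk → o i = true := by
      intro i h2
      rcases Nat.eq_zero_or_pos i with rfl | h
      · exact ho0
      · have hmin := Nat.find_min hexk (show i - 1 < Nat.find hexk by omega)
        push_neg at hmin
        have hne := hmin (by omega)
        have heq : i - 1 + 1 = i := by omega
        rw [heq] at hne
        rcases hoi : o i with _ | _
        · exact absurd hoi hne
        · rfl
    have hqual : Nat.find hexk + 1 = 0 ∨ (1 ≤ Nat.find hexk + 1 ∧
        o (Nat.find hexk + 1 - 1) = true ∧ o (Nat.find hexk + 1) = false) :=
      Or.inr ⟨by omega, by simpa using htrue (Nat.find hexk) le_rfl, hk0.2⟩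
    obtain ⟨p, hp, hf⟩ := hIP (Nat.find hexk + 1) hqual
    have htp : t p = Nat.find hexk + 1 := hinj (by rw [← ht1 p hp, hf])
    have hep : e p = 1 := by
      have h1 : 1 ≤ e p := by
        rcases he3 p hp with ⟨h0, -⟩ | ⟨-, h1, -⟩
        · omega
        · exact h1
      have h2 : e p ≤ 1 := by
        by_contra h
        rcases he3 p hp with ⟨h0, -⟩ | ⟨-, -, h2 | h2⟩
        · omega
        · omega
        · have hepl := he1 p hp
          have hot : o (e p - 1) = true := htrue (e p - 1) (by omega)
          rw [h2] at hot; exact absurd hot (by simp)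
      omega
    have hx : f 1 ∈ Ini Q2 := by
      rw [hQ2ini]
      exact Or.inl ⟨p, hp, by rw [CombAux.ascL_head?, hep]⟩
    rw [hIQ2] at hx
    rcases hx with h | h
    · rw [hclass, hSpk, Set.mem_setOf_eq] at h
      rcases h with ⟨-, h⟩ | ⟨mm, hm1, -, h⟩
      · exact absurd (hinj h) (by omega)
      · have hmm : mm = 0 := by have := hinj h; omega
        rw [hmm, ho0] at hm1; exact absurd hm1 (by simp)
    · exact h.2 (hrC 1)
  · -- the extra vertex is f 0
    obtain ⟨p, hp, hf⟩ := hIP 0 (Or.inl rfl)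
    have ht0 : t p = 0 := hinj (by rw [← ht1 p hp, hf])
    have he0 : e p = 0 := by
      rcases he3 p hp with ⟨-, h⟩ | ⟨h, -⟩
      · exact h
      · omega
    have hx : f 0 ∈ Ini Q2 := by
      rw [hQ2ini]
      exact Or.inl ⟨p, hp, by rw [CombAux.ascL_head?, he0]⟩
    rw [hIQ2] at hx
    rcases hx with h | h
    · rw [hclass, hSpk, Set.mem_setOf_eq] at h
      rcases h with ⟨h1, -⟩ | ⟨mm, -, -, h⟩
      · exact ho0 h1
      · exact absurd (hinj h) (by omega)
    · exact h.2 (hrC 0)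
end
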